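/- arXiv:0811.2042 — 5 statements merged into one kernel-verified Lean document; each statement's English description precedes it below -/
import Mathlib

section
/- Let 𝒮 be a finite set, let P be an irreducible row-stochastic matrix indexed by 𝒮 (irreducible meaning: for all i,j ∈ 𝒮 there is n ≥ 0 with (P^n)_{ij} > 0), and let π be a stationary probability distribution for P (πP = π). Let S ⊆ 𝒮 be nonempty and T = 𝒮 ∖ S. Then: (i) the matrix series N = Σ_{k=0}^∞ (P_{TT})^k converges, where P_{TT} is the block of P with both indices in T; (ii) the matrix Q = P_{SS} + P_{ST} N P_{TS} on S (the transition matrix of the chain obtained by observing the original chain only when it visits S) is row-stochastic and irreducible; and (iii) the probability distribution π̄ on S defined by π̄_s = π_s / Σ_{s'∈S} π_{s'} satisfies π̄ Q = π̄. -/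
attribute [local instance] Classical.propDecidable

/-- The block of the matrix `P` with row indices in `S` and column indices in `T`. -/
noncomputable def subM {𝒮 : Type*} (P : Matrix 𝒮 𝒮 ℝ) (S T : Finset 𝒮) :
    Matrix {x // x ∈ S} {x // x ∈ T} ℝ :=
  fun i j => P i.1 j.1

/-- `N = Σ_{k=0}^∞ (P_{TT})^k`, where `T = 𝒮 ∖ S` (the sum taken entrywise). -/
noncomputable def Nmat {𝒮 : Type*} [Fintype 𝒮] [DecidableEq 𝒮] (P : Matrix 𝒮 𝒮 ℝ)
    (S : Finset 𝒮) : Matrix {x // x ∈ Sᶜ} {x // x ∈ Sᶜ} ℝ :=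
  fun i j => ∑' k : ℕ, (subM P Sᶜ Sᶜ ^ k) i j

/-- `Q = P_{SS} + P_{ST} N P_{TS}`: the transition matrix of the chain obtained by observing
the original chain only when it visits `S`. -/
noncomputable def Qmat {𝒮 : Type*} [Fintype 𝒮] [DecidableEq 𝒮] (P : Matrix 𝒮 𝒮 ℝ)
    (S : Finset 𝒮) : Matrix {x // x ∈ S} {x // x ∈ S} ℝ :=
  subM P S S + subM P S Sᶜ * Nmat P S * subM P Sᶜ S

section aux
variable {𝒮 : Type*} [Fintype 𝒮] [DecidableEq 𝒮]

lemma matpow_nonneg (P : Matrix 𝒮 𝒮 ℝ) (hnn : ∀ i j, 0 ≤ P i j) :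
    ∀ (k : ℕ) i j, 0 ≤ (P ^ k) i j := by
  intro k
  induction k with
  | zero => intro i j; by_cases h : i = j <;> simp [Matrix.one_apply, h]
  | succ n ih =>
    intro i j
    rw [pow_succ, Matrix.mul_apply]
    exact Finset.sum_nonneg fun u _ => mul_nonneg (ih i u) (hnn u j)

lemma matpow_row (P : Matrix 𝒮 𝒮 ℝ) (hrow : ∀ i, ∑ j, P i j = 1) :
    ∀ (k : ℕ) i, ∑ j, (P ^ k) i j = 1 := by
  intro k
  induction k with
  | zero => intro i; simp [Matrix.one_apply]
  | succ n ih =>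
    intro i
    simp only [pow_succ, Matrix.mul_apply]
    rw [Finset.sum_comm]
    simp_rw [← Finset.mul_sum, hrow, mul_one]
    exact ih i

lemma submul_nonneg (P : Matrix 𝒮 𝒮 ℝ) (hnn : ∀ i j, 0 ≤ P i j) (S T : Finset 𝒮) :
    ∀ i j, 0 ≤ subM P S T i j := fun i j => hnn i.1 j.1

lemma subpow_nonneg (P : Matrix 𝒮 𝒮 ℝ) (hnn : ∀ i j, 0 ≤ P i j) (S : Finset 𝒮) :
    ∀ (k : ℕ) (t j : {x // x ∈ Sᶜ}), 0 ≤ (subM P Sᶜ Sᶜ ^ k) t j :=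
  matpow_nonneg _ (submul_nonneg P hnn _ _)

lemma subpow_le (P : Matrix 𝒮 𝒮 ℝ) (hnn : ∀ i j, 0 ≤ P i j) (S : Finset 𝒮) :
    ∀ (k : ℕ) (t j : {x // x ∈ Sᶜ}), (subM P Sᶜ Sᶜ ^ k) t j ≤ (P ^ k) t.1 j.1 := by
  intro k
  induction k with
  | zero =>
    intro t j
    by_cases h : t = j
    · subst h; simp [Matrix.one_apply]
    · have h2 : t.1 ≠ j.1 := fun hh => h (Subtype.ext hh)
      simp [Matrix.one_apply, h, h2]
  | succ n ih =>
    intro t j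
    rw [pow_succ, pow_succ, Matrix.mul_apply, Matrix.mul_apply]
    calc ∑ u : {x // x ∈ Sᶜ}, (subM P Sᶜ Sᶜ ^ n) t u * subM P Sᶜ Sᶜ u j
        ≤ ∑ u : {x // x ∈ Sᶜ}, (P ^ n) t.1 u.1 * P u.1 j.1 := by
          apply Finset.sum_le_sum
          intro u _
          exact mul_le_mul_of_nonneg_right (ih t u) (hnn u.1 j.1)
      _ = ∑ u ∈ Sᶜ, (P ^ n) t.1 u * P u j.1 := Finset.sum_coe_sort Sᶜ (fun u => (P ^ n) t.1 u * P u j.1)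
      _ ≤ ∑ u, (P ^ n) t.1 u * P u j.1 := by
          apply Finset.sum_le_sum_of_subset_of_nonneg (Finset.subset_univ _)
          intro u _ _
          exact mul_nonneg (matpow_nonneg P hnn n _ _) (hnn _ _)
open Finset

lemma geo_div_sum {c : ℝ} {M : ℕ} (hc0 : 0 ≤ c) (hc1 : c < 1) (hM : 0 < M) :
    ∀ N : ℕ, ∑ n ∈ Finset.range N, c ^ (n / M) ≤ M / (1 - c) := by
  have key : ∀ N : ℕ, ∑ n ∈ Finset.range (M * N), c ^ (n / M) = M * ∑ q ∈ Finset.range N, c ^ q := by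
    intro N
    induction N with
    | zero => simp
    | succ N ih =>
      have h1 : M * (N + 1) = M * N + M := by ring
      rw [h1, Finset.sum_range_succ, Finset.range_eq_Ico,
        ← Finset.sum_Ico_consecutive _ (Nat.zero_le (M * N)) (Nat.le_add_right _ M),
        ← Finset.range_eq_Ico, ih, Finset.sum_Ico_eq_sum_range]
      have h2 : ∀ i ∈ Finset.range (M * N + M - M * N), c ^ ((M * N + i) / M) = c ^ N := by
        intro i hi
        simp only [Nat.add_sub_cancel_left, Finset.mem_range] at hi
        rw [Nat.mul_add_div hM, Nat.div_eq_of_lt hi, add_zero]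
      rw [Finset.sum_congr rfl h2]
      simp only [Nat.add_sub_cancel_left, Finset.sum_const, Finset.card_range, nsmul_eq_mul]
      ring
  intro N
  calc ∑ n ∈ Finset.range N, c ^ (n / M)
      ≤ ∑ n ∈ Finset.range (M * N), c ^ (n / M) := by
        apply Finset.sum_le_sum_of_subset_of_nonneg
        · exact Finset.range_subset_range.2 (Nat.le_mul_of_pos_left N hM)
        · intro i _ _; exact pow_nonneg hc0 _
    _ = M * ∑ q ∈ Finset.range N, c ^ q := key N
    _ ≤ M * (1 - c)⁻¹ := by
        apply mul_le_mul_of_nonneg_left _ (Nat.cast_nonneg M)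
        rw [geom_sum_eq (ne_of_lt hc1)]
        have h2 : (0:ℝ) < 1 - c := by linarith
        have h4 : (0:ℝ) ≤ c ^ N := pow_nonneg hc0 N
        rw [div_le_iff_of_neg (by linarith : c - 1 < 0)]
        rw [inv_mul_eq_div, div_le_iff₀ h2]
        nlinarith
    _ = M / (1 - c) := by rw [div_eq_mul_inv]

lemma sub_summable (P : Matrix 𝒮 𝒮 ℝ) (hnn : ∀ i j, 0 ≤ P i j)
    (hrow : ∀ i, ∑ j, P i j = 1)
    (hirr : ∀ i j, ∃ k : ℕ, 0 < (P ^ k) i j)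
    (S : Finset 𝒮) (hS : S.Nonempty) :
    ∀ t₀ j₀ : {x // x ∈ Sᶜ}, Summable fun k : ℕ => (subM P Sᶜ Sᶜ ^ k) t₀ j₀ := by
  intro t₀ j₀
  set A := subM P Sᶜ Sᶜ with hA
  set rs : ℕ → {x // x ∈ Sᶜ} → ℝ := fun k t => ∑ j, (A ^ k) t j with hrs
  have hAnn : ∀ t j, 0 ≤ A t j := submul_nonneg P hnn _ _
  have hApow : ∀ k t j, 0 ≤ (A ^ k) t j := subpow_nonneg P hnn S
  have hrs0 : ∀ k t, 0 ≤ rs k t := fun k t => Finset.sum_nonneg fun j _ => hApow k t j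
  have hrszero : ∀ t, rs 0 t = 1 := by
    intro t; simp [hrs, Matrix.one_apply]
  have hArow : ∀ t, ∑ j, A t j ≤ 1 := by
    intro t
    calc ∑ j : {x // x ∈ Sᶜ}, A t j = ∑ j ∈ Sᶜ, P t.1 j := Finset.sum_coe_sort Sᶜ (fun j => P t.1 j)
      _ ≤ ∑ j, P t.1 j := Finset.sum_le_sum_of_subset_of_nonneg (Finset.subset_univ _)
          (fun j _ _ => hnn _ _)
      _ = 1 := hrow t.1
  have hsplit : ∀ a b t, rs (a + b) t = ∑ u, (A ^ a) t u * rs b u := by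
    intro a b t
    simp only [hrs, pow_add, Matrix.mul_apply]
    rw [Finset.sum_comm]
    simp_rw [← Finset.mul_sum]
  have hanti : ∀ k t, rs (k + 1) t ≤ rs k t := by
    intro k t
    rw [hsplit k 1 t]
    calc ∑ u, (A ^ k) t u * rs 1 u ≤ ∑ u, (A ^ k) t u * 1 := by
          apply Finset.sum_le_sum; intro u _
          apply mul_le_mul_of_nonneg_left _ (hApow k t u)
          simpa [hrs, pow_one] using hArow u
      _ = rs k t := by simp [hrs]
  have hanti' : ∀ t, Antitone (fun k => rs k t) :=
    fun t => antitone_nat_of_succ_le (fun n => hanti n t)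
  -- every row eventually has row sum < 1
  have hexists : ∀ t : {x // x ∈ Sᶜ}, ∃ k, rs k t < 1 := by
    intro t
    obtain ⟨s, hs⟩ := hS
    obtain ⟨k, hk⟩ := hirr t.1 s
    refine ⟨k, ?_⟩
    have h1 : rs k t ≤ ∑ j ∈ Sᶜ, (P ^ k) t.1 j := by
      calc rs k t ≤ ∑ j : {x // x ∈ Sᶜ}, (P ^ k) t.1 j.1 :=
            Finset.sum_le_sum (fun j _ => subpow_le P hnn S k t j)
        _ = ∑ j ∈ Sᶜ, (P ^ k) t.1 j := Finset.sum_coe_sort Sᶜ (fun j => (P ^ k) t.1 j)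
    have hsmem : s ∉ Sᶜ := by simp [hs]
    have h2 : (P ^ k) t.1 s + ∑ j ∈ Sᶜ, (P ^ k) t.1 j ≤ 1 := by
      rw [← Finset.sum_insert hsmem]
      calc ∑ j ∈ insert s Sᶜ, (P ^ k) t.1 j ≤ ∑ j, (P ^ k) t.1 j :=
            Finset.sum_le_sum_of_subset_of_nonneg (Finset.subset_univ _)
              (fun j _ _ => matpow_nonneg P hnn k _ _)
        _ = 1 := matpow_row P hrow k t.1
    linarith
  choose kk hkk using hexists
  set M := Finset.univ.sup kk with hMdef
  have hMle : ∀ t, kk t ≤ M := fun t => Finset.le_sup (Finset.mem_univ t)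
  have hrsM : ∀ t, rs M t < 1 := fun t => lt_of_le_of_lt (hanti' t (hMle t)) (hkk t)
  have hMpos : 0 < M := by
    rcases Nat.eq_zero_or_pos M with h | h
    · exfalso; have := hrsM t₀; rw [h, hrszero t₀] at this; exact lt_irrefl 1 this
    · exact h
  have hne : (Finset.univ : Finset {x // x ∈ Sᶜ}).Nonempty := ⟨t₀, Finset.mem_univ _⟩
  set c := Finset.univ.sup' hne (fun t => rs M t) with hcdef
  have hcle : ∀ t, rs M t ≤ c := fun t => Finset.le_sup' _ (Finset.mem_univ t)
  have hc1 : c < 1 := by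
    rw [hcdef, Finset.sup'_lt_iff]
    exact fun t _ => hrsM t
  have hc0 : 0 ≤ c := le_trans (hrs0 M t₀) (hcle t₀)
  -- rs (M*q) ≤ c^q
  have hpowq : ∀ q t, rs (M * q) t ≤ c ^ q := by
    intro q
    induction q with
    | zero => intro t; simp [hrszero t]
    | succ q ih =>
      intro t
      have h1 : M * (q + 1) = M + M * q := by ring
      rw [h1, hsplit M (M * q) t]
      calc ∑ u, (A ^ M) t u * rs (M * q) u ≤ ∑ u, (A ^ M) t u * c ^ q := by
            apply Finset.sum_le_sum; intro u _
            exact mul_le_mul_of_nonneg_left (ih u) (hApow M t u)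
        _ = rs M t * c ^ q := by rw [← Finset.sum_mul]
        _ ≤ c * c ^ q := mul_le_mul_of_nonneg_right (hcle t) (pow_nonneg hc0 q)
        _ = c ^ (q + 1) := by ring
  -- entry bound
  have hentry : ∀ n, (A ^ n) t₀ j₀ ≤ c ^ (n / M) := by
    intro n
    have h1 : (A ^ n) t₀ j₀ ≤ rs n t₀ :=
      Finset.single_le_sum (fun j _ => hApow n t₀ j) (Finset.mem_univ j₀)
    have h2 : M * (n / M) ≤ n := by
      rw [mul_comm]; exact Nat.div_mul_le_self n M
    calc (A ^ n) t₀ j₀ ≤ rs n t₀ := h1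
      _ ≤ rs (M * (n / M)) t₀ := hanti' t₀ h2
      _ ≤ c ^ (n / M) := hpowq _ t₀
  apply summable_of_sum_range_le (fun n => hApow n t₀ j₀)
  intro n
  calc ∑ i ∈ Finset.range n, (A ^ i) t₀ j₀ ≤ ∑ i ∈ Finset.range n, c ^ (i / M) :=
        Finset.sum_le_sum (fun i _ => hentry i)
    _ ≤ M / (1 - c) := geo_div_sum hc0 hc1 hMpos n

variable (P : Matrix 𝒮 𝒮 ℝ) (S : Finset 𝒮)

lemma Nmat_nonneg (hnn : ∀ i j, 0 ≤ P i j) :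
    ∀ t j, 0 ≤ Nmat P S t j :=
  fun t j => tsum_nonneg (fun k => subpow_nonneg P hnn S k t j)

lemma Nmat_ge_pow (hnn : ∀ i j, 0 ≤ P i j)
    (hsum : ∀ t j : {x // x ∈ Sᶜ}, Summable fun k : ℕ => (subM P Sᶜ Sᶜ ^ k) t j)
    (m : ℕ) : ∀ t j, (subM P Sᶜ Sᶜ ^ m) t j ≤ Nmat P S t j :=
  fun t j => Summable.le_tsum (hsum t j) m (fun k _ => subpow_nonneg P hnn S k t j)

lemma Nmat_left (hsum : ∀ t j : {x // x ∈ Sᶜ}, Summable fun k : ℕ => (subM P Sᶜ Sᶜ ^ k) t j) :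
    Nmat P S = 1 + subM P Sᶜ Sᶜ * Nmat P S := by
  ext t j
  set A := subM P Sᶜ Sᶜ with hA
  have h1 : (A * Nmat P S) t j = ∑' k : ℕ, (A ^ (k + 1)) t j := by
    rw [Matrix.mul_apply]
    have h2 : ∀ u : {x // x ∈ Sᶜ}, A t u * Nmat P S u j = ∑' k : ℕ, A t u * (A ^ k) u j := by
      intro u; rw [Nmat, tsum_mul_left]
    rw [Finset.sum_congr rfl (fun u _ => h2 u)]
    rw [← Summable.tsum_finsetSum (fun u _ => Summable.mul_left _ (hsum u j))]
    congr 1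
    ext k
    rw [pow_succ', Matrix.mul_apply]
  have h3 : Nmat P S t j = (A ^ 0) t j + ∑' k : ℕ, (A ^ (k + 1)) t j := by
    rw [Nmat]
    exact Summable.tsum_eq_zero_add (hsum t j)
  simp only [Matrix.add_apply, h1, h3, pow_zero]

lemma Nmat_right (hsum : ∀ t j : {x // x ∈ Sᶜ}, Summable fun k : ℕ => (subM P Sᶜ Sᶜ ^ k) t j) :
    Nmat P S = 1 + Nmat P S * subM P Sᶜ Sᶜ := by
  ext t j
  set A := subM P Sᶜ Sᶜ with hA
  have h1 : (Nmat P S * A) t j = ∑' k : ℕ, (A ^ (k + 1)) t j := by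
    rw [Matrix.mul_apply]
    have h2 : ∀ u : {x // x ∈ Sᶜ}, Nmat P S t u * A u j = ∑' k : ℕ, (A ^ k) t u * A u j := by
      intro u; rw [Nmat, tsum_mul_right]
    rw [Finset.sum_congr rfl (fun u _ => h2 u)]
    rw [← Summable.tsum_finsetSum (fun u _ => Summable.mul_right _ (hsum t u))]
    apply tsum_congr
    intro k
    rw [pow_succ, Matrix.mul_apply]
  have h3 : Nmat P S t j = (A ^ 0) t j + ∑' k : ℕ, (A ^ (k + 1)) t j := by
    rw [Nmat]
    exact Summable.tsum_eq_zero_add (hsum t j)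
  simp only [Matrix.add_apply, h1, h3, pow_zero]

lemma Nmat_inv_right (hsum : ∀ t j : {x // x ∈ Sᶜ}, Summable fun k : ℕ => (subM P Sᶜ Sᶜ ^ k) t j) :
    Nmat P S * (1 - subM P Sᶜ Sᶜ) = 1 := by
  have h := Nmat_right P S hsum
  rw [Matrix.mul_sub, Matrix.mul_one]
  nth_rewrite 1 [h]
  exact add_sub_cancel_right _ _

lemma Nmat_inv_left (hsum : ∀ t j : {x // x ∈ Sᶜ}, Summable fun k : ℕ => (subM P Sᶜ Sᶜ ^ k) t j) :
    (1 - subM P Sᶜ Sᶜ) * Nmat P S = 1 := by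
  have h := Nmat_left P S hsum
  rw [Matrix.sub_mul, Matrix.one_mul]
  nth_rewrite 1 [h]
  exact add_sub_cancel_right _ _

lemma Q_nonneg (hnn : ∀ i j, 0 ≤ P i j) : ∀ i j, 0 ≤ Qmat P S i j := by
  intro i j
  rw [Qmat, Matrix.add_apply]
  apply add_nonneg (hnn i.1 j.1)
  rw [Matrix.mul_apply]
  apply Finset.sum_nonneg
  intro t _
  apply mul_nonneg _ (hnn t.1 j.1)
  rw [Matrix.mul_apply]
  exact Finset.sum_nonneg fun t' _ => mul_nonneg (hnn i.1 t'.1) (Nmat_nonneg P S hnn t' t)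

lemma NP_row (hnn : ∀ i j, 0 ≤ P i j) (hrow : ∀ i, ∑ j, P i j = 1)
    (hsum : ∀ t j : {x // x ∈ Sᶜ}, Summable fun k : ℕ => (subM P Sᶜ Sᶜ ^ k) t j) :
    ∀ t : {x // x ∈ Sᶜ}, ∑ j : {x // x ∈ S}, (Nmat P S * subM P Sᶜ S) t j = 1 := by
  intro t
  have h1 : ∑ j, (Nmat P S * (1 - subM P Sᶜ Sᶜ)) t j = 1 := by
    rw [Nmat_inv_right P S hsum]
    simp [Matrix.one_apply]
  have h2 : ∀ t' : {x // x ∈ Sᶜ}, ∑ j : {x // x ∈ Sᶜ}, (1 - subM P Sᶜ Sᶜ) t' j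
      = ∑ j : {x // x ∈ S}, subM P Sᶜ S t' j := by
    intro t'
    have ha : ∑ j ∈ S, P t'.1 j + ∑ j ∈ Sᶜ, P t'.1 j = 1 := by
      rw [Finset.sum_add_sum_compl S (fun x => P t'.1 x)]; exact hrow t'.1
    have hb : ∑ j : {x // x ∈ Sᶜ}, (1 - subM P Sᶜ Sᶜ) t' j
        = 1 - ∑ j ∈ Sᶜ, P t'.1 j := by
      simp only [Matrix.sub_apply]
      rw [Finset.sum_sub_distrib]
      congr 1
      · simp [Matrix.one_apply]
      · exact Finset.sum_coe_sort Sᶜ (fun j => P t'.1 j)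
    have hc : ∑ j : {x // x ∈ S}, subM P Sᶜ S t' j = ∑ j ∈ S, P t'.1 j :=
      Finset.sum_coe_sort S (fun j => P t'.1 j)
    rw [hb, hc]
    linarith
  calc ∑ j : {x // x ∈ S}, (Nmat P S * subM P Sᶜ S) t j
      = ∑ j : {x // x ∈ S}, ∑ t', Nmat P S t t' * subM P Sᶜ S t' j := by
        simp_rw [Matrix.mul_apply]
    _ = ∑ t', Nmat P S t t' * ∑ j : {x // x ∈ S}, subM P Sᶜ S t' j := by
        rw [Finset.sum_comm]; simp_rw [← Finset.mul_sum]
    _ = ∑ t', Nmat P S t t' * ∑ j : {x // x ∈ Sᶜ}, (1 - subM P Sᶜ Sᶜ) t' j := by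
        simp_rw [h2]
    _ = ∑ j, (Nmat P S * (1 - subM P Sᶜ Sᶜ)) t j := by
        symm
        simp_rw [Matrix.mul_apply]
        rw [Finset.sum_comm]
        simp_rw [← Finset.mul_sum]
    _ = 1 := h1

lemma Q_row (hnn : ∀ i j, 0 ≤ P i j) (hrow : ∀ i, ∑ j, P i j = 1)
    (hsum : ∀ t j : {x // x ∈ Sᶜ}, Summable fun k : ℕ => (subM P Sᶜ Sᶜ ^ k) t j) :
    ∀ i, ∑ j : {x // x ∈ S}, Qmat P S i j = 1 := by
  intro i
  have hassoc : subM P S Sᶜ * Nmat P S * subM P Sᶜ S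
      = subM P S Sᶜ * (Nmat P S * subM P Sᶜ S) := by rw [Matrix.mul_assoc]
  have h1 : ∑ j : {x // x ∈ S}, (subM P S Sᶜ * (Nmat P S * subM P Sᶜ S)) i j
      = ∑ t ∈ Sᶜ, P i.1 t := by
    calc ∑ j : {x // x ∈ S}, (subM P S Sᶜ * (Nmat P S * subM P Sᶜ S)) i j
        = ∑ t, subM P S Sᶜ i t * ∑ j : {x // x ∈ S}, (Nmat P S * subM P Sᶜ S) t j := by
          simp_rw [Matrix.mul_apply]
          rw [Finset.sum_comm]
          simp_rw [← Finset.mul_sum]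
      _ = ∑ t : {x // x ∈ Sᶜ}, P i.1 t.1 := by
          simp_rw [NP_row P S hnn hrow hsum, mul_one, subM]
      _ = ∑ t ∈ Sᶜ, P i.1 t := Finset.sum_coe_sort Sᶜ (fun t => P i.1 t)
  simp only [Qmat, Matrix.add_apply, Finset.sum_add_distrib, hassoc, h1]
  have h2 : ∑ j : {x // x ∈ S}, subM P S S i j = ∑ j ∈ S, P i.1 j :=
    Finset.sum_coe_sort S (fun j => P i.1 j)
  rw [h2, Finset.sum_add_sum_compl S (fun x => P i.1 x)]
  exact hrow i.1

lemma pi_stat_pow (π : 𝒮 → ℝ) (hstat : ∀ j, ∑ i, π i * P i j = π j) :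
    ∀ (k : ℕ) j, ∑ i, π i * (P ^ k) i j = π j := by
  intro k
  induction k with
  | zero => intro j; simp [Matrix.one_apply]
  | succ n ih =>
    intro j
    simp_rw [pow_succ, Matrix.mul_apply, Finset.mul_sum]
    rw [Finset.sum_comm]
    simp_rw [← mul_assoc, ← Finset.sum_mul, ih]
    exact hstat j

lemma pi_pos (hnn : ∀ i j, 0 ≤ P i j) (hirr : ∀ i j, ∃ k : ℕ, 0 < (P ^ k) i j)
    (π : 𝒮 → ℝ) (hπ0 : ∀ i, 0 ≤ π i) (hπ1 : ∑ i, π i = 1)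
    (hstat : ∀ j, ∑ i, π i * P i j = π j) : ∀ j, 0 < π j := by
  have hex : ∃ i, 0 < π i := by
    by_contra h
    push_neg at h
    have : ∀ i, π i = 0 := fun i => le_antisymm (h i) (hπ0 i)
    simp [this] at hπ1
  obtain ⟨i0, hi0⟩ := hex
  intro j
  obtain ⟨k, hk⟩ := hirr i0 j
  have h1 : π i0 * (P ^ k) i0 j ≤ ∑ i, π i * (P ^ k) i j :=
    Finset.single_le_sum (fun i _ => mul_nonneg (hπ0 i) (matpow_nonneg P hnn k i j))
      (Finset.mem_univ i0)
  rw [pi_stat_pow P π hstat k j] at h1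
  exact lt_of_lt_of_le (mul_pos hi0 hk) h1

lemma pi_T (hsum : ∀ t j : {x // x ∈ Sᶜ}, Summable fun k : ℕ => (subM P Sᶜ Sᶜ ^ k) t j)
    (π : 𝒮 → ℝ) (hstat : ∀ j, ∑ i, π i * P i j = π j) :
    ∀ t : {x // x ∈ Sᶜ}, ∑ i : {x // x ∈ S}, π i.1 * (subM P S Sᶜ * Nmat P S) i t = π t.1 := by
  set A := subM P Sᶜ Sᶜ with hA
  set μ : {x // x ∈ Sᶜ} → ℝ := fun t => π t.1 with hμ
  set ρ : {x // x ∈ Sᶜ} → ℝ := fun t => ∑ i : {x // x ∈ S}, π i.1 * subM P S Sᶜ i t with hρ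
  have step1 : ∀ t, Matrix.vecMul μ (1 - A) t = ρ t := by
    intro t
    have hsplit : ∑ u ∈ S, π u * P u t.1 + ∑ u ∈ Sᶜ, π u * P u t.1 = π t.1 := by
      rw [Finset.sum_add_sum_compl S (fun u => π u * P u t.1)]
      exact hstat t.1
    have e1 : ∑ u ∈ S, π u * P u t.1 = ρ t := by
      rw [hρ]
      exact (Finset.sum_coe_sort S (fun u => π u * P u t.1)).symm
    have e2 : ∑ u ∈ Sᶜ, π u * P u t.1 = Matrix.vecMul μ A t := by
      simp only [Matrix.vecMul, dotProduct]
      exact (Finset.sum_coe_sort Sᶜ (fun u => π u * P u t.1)).symm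
    have e3 : Matrix.vecMul μ (1 - A) t = μ t - Matrix.vecMul μ A t := by
      rw [Matrix.vecMul_sub, Matrix.vecMul_one, Pi.sub_apply]
    rw [e3, ← e2]
    have : μ t = π t.1 := rfl
    rw [this, ← hsplit, ← e1]
    ring
  have step2 : ∀ t, μ t = Matrix.vecMul ρ (Nmat P S) t := by
    have h1 : Matrix.vecMul μ ((1 - A) * Nmat P S) = Matrix.vecMul ρ (Nmat P S) := by
      have hfe : Matrix.vecMul μ (1 - A) = ρ := funext step1
      rw [← Matrix.vecMul_vecMul, hfe]
    rw [Nmat_inv_left P S hsum, Matrix.vecMul_one] at h1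
    exact fun t => congrFun h1 t
  intro t
  calc ∑ i : {x // x ∈ S}, π i.1 * (subM P S Sᶜ * Nmat P S) i t
      = ∑ i : {x // x ∈ S}, ∑ t', π i.1 * (subM P S Sᶜ i t' * Nmat P S t' t) := by
        simp_rw [Matrix.mul_apply, Finset.mul_sum]
    _ = ∑ t', ρ t' * Nmat P S t' t := by
        rw [Finset.sum_comm]
        simp_rw [hρ, Finset.sum_mul, mul_assoc]
    _ = Matrix.vecMul ρ (Nmat P S) t := by
        simp [Matrix.vecMul, dotProduct]
    _ = μ t := (step2 t).symm

lemma pi_stat_Q (hsum : ∀ t j : {x // x ∈ Sᶜ}, Summable fun k : ℕ => (subM P Sᶜ Sᶜ ^ k) t j)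
    (π : 𝒮 → ℝ) (hstat : ∀ j, ∑ i, π i * P i j = π j) :
    ∀ j : {x // x ∈ S}, ∑ i : {x // x ∈ S}, π i.1 * Qmat P S i j = π j.1 := by
  intro j
  have h2 : ∑ i : {x // x ∈ S}, π i.1 * (subM P S Sᶜ * Nmat P S * subM P Sᶜ S) i j
      = ∑ t : {x // x ∈ Sᶜ}, π t.1 * P t.1 j.1 := by
    calc ∑ i : {x // x ∈ S}, π i.1 * (subM P S Sᶜ * Nmat P S * subM P Sᶜ S) i j
        = ∑ i : {x // x ∈ S}, ∑ t, π i.1 * ((subM P S Sᶜ * Nmat P S) i t * subM P Sᶜ S t j) := by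
          simp_rw [Matrix.mul_apply, Finset.mul_sum]
      _ = ∑ t, (∑ i : {x // x ∈ S}, π i.1 * (subM P S Sᶜ * Nmat P S) i t) * subM P Sᶜ S t j := by
          rw [Finset.sum_comm]
          simp_rw [Finset.sum_mul, mul_assoc]
      _ = ∑ t : {x // x ∈ Sᶜ}, π t.1 * P t.1 j.1 := by
          simp_rw [pi_T P S hsum π hstat, subM]
  calc ∑ i : {x // x ∈ S}, π i.1 * Qmat P S i j
      = ∑ i : {x // x ∈ S}, π i.1 * subM P S S i j
        + ∑ i : {x // x ∈ S}, π i.1 * (subM P S Sᶜ * Nmat P S * subM P Sᶜ S) i j := by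
        simp_rw [Qmat, Matrix.add_apply, mul_add, Finset.sum_add_distrib]
    _ = ∑ u ∈ S, π u * P u j.1 + ∑ u ∈ Sᶜ, π u * P u j.1 := by
        rw [h2]
        congr 1
        · exact Finset.sum_coe_sort S (fun u => π u * P u j.1)
        · exact Finset.sum_coe_sort Sᶜ (fun u => π u * P u j.1)
    _ = π j.1 := by
        rw [Finset.sum_add_sum_compl S (fun u => π u * P u j.1)]
        exact hstat j.1

lemma exists_pos_of_sum_pos {ι : Type*} [Fintype ι] {f : ι → ℝ}
    (h : 0 < ∑ i, f i) : ∃ i, 0 < f i := by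
  by_contra hc
  push_neg at hc
  have : ∑ i, f i ≤ 0 := Finset.sum_nonpos (fun i _ => hc i)
  linarith

lemma Q_ge_exc (hnn : ∀ i j, 0 ≤ P i j)
    (hsum : ∀ t j : {x // x ∈ Sᶜ}, Summable fun k : ℕ => (subM P Sᶜ Sᶜ ^ k) t j) (m : ℕ) :
    ∀ (i j : {x // x ∈ S}),
      (subM P S Sᶜ * (subM P Sᶜ Sᶜ ^ m * subM P Sᶜ S)) i j ≤ Qmat P S i j := by
  intro i j
  have h1 : (subM P S Sᶜ * (subM P Sᶜ Sᶜ ^ m * subM P Sᶜ S)) i j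
      ≤ (subM P S Sᶜ * (Nmat P S * subM P Sᶜ S)) i j := by
    simp_rw [Matrix.mul_apply]
    apply Finset.sum_le_sum
    intro t _
    apply mul_le_mul_of_nonneg_left _ (hnn i.1 t.1)
    apply Finset.sum_le_sum
    intro t' _
    exact mul_le_mul_of_nonneg_right (Nmat_ge_pow P S hnn hsum m t t') (hnn t'.1 j.1)
  have h2 : (subM P S Sᶜ * (Nmat P S * subM P Sᶜ S)) i j ≤ Qmat P S i j := by
    rw [Qmat, ← Matrix.mul_assoc, Matrix.add_apply]
    have : 0 ≤ subM P S S i j := hnn i.1 j.1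
    linarith
  linarith

lemma Q_ge_P (hnn : ∀ i j, 0 ≤ P i j) :
    ∀ (i j : {x // x ∈ S}), P i.1 j.1 ≤ Qmat P S i j := by
  intro i j
  rw [Qmat, Matrix.add_apply]
  have : 0 ≤ (subM P S Sᶜ * Nmat P S * subM P Sᶜ S) i j := by
    rw [Matrix.mul_apply]
    apply Finset.sum_nonneg
    intro t _
    apply mul_nonneg _ (hnn t.1 j.1)
    rw [Matrix.mul_apply]
    exact Finset.sum_nonneg fun t' _ => mul_nonneg (hnn i.1 t'.1) (Nmat_nonneg P S hnn t' t)
  have h2 : subM P S S i j = P i.1 j.1 := rfl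
  linarith

lemma exc_nonneg (hnn : ∀ i j, 0 ≤ P i j) (m : ℕ) :
    ∀ (t : {x // x ∈ Sᶜ}) (a : {x // x ∈ S}),
      0 ≤ (subM P Sᶜ Sᶜ ^ m * subM P Sᶜ S) t a := by
  intro t a
  rw [Matrix.mul_apply]
  exact Finset.sum_nonneg fun t' _ =>
    mul_nonneg (subpow_nonneg P hnn S m t t') (hnn t'.1 a.1)

lemma Q_reach (hnn : ∀ i j, 0 ≤ P i j)
    (hsum : ∀ t j : {x // x ∈ Sᶜ}, Summable fun k : ℕ => (subM P Sᶜ Sᶜ ^ k) t j) :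
    ∀ n : ℕ,
      (∀ (t : {x // x ∈ Sᶜ}) (s' : {x // x ∈ S}), 0 < (P ^ n) t.1 s'.1 →
        ∃ (m : ℕ) (a : {x // x ∈ S}), 0 < (subM P Sᶜ Sᶜ ^ m * subM P Sᶜ S) t a ∧
          ∃ j : ℕ, 0 < (Qmat P S ^ j) a s') ∧
      (∀ (s s' : {x // x ∈ S}), 0 < (P ^ n) s.1 s'.1 → ∃ m : ℕ, 0 < (Qmat P S ^ m) s s') := by
  have hQnn := Q_nonneg P S hnn
  have hQpow : ∀ (k : ℕ) a b, 0 ≤ (Qmat P S ^ k) a b := matpow_nonneg _ hQnn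
  intro n
  induction n with
  | zero =>
    constructor
    · intro t s' hpos
      exfalso
      have hne : t.1 ≠ s'.1 := by
        intro h
        have h1 := t.2
        rw [h] at h1
        rw [Finset.mem_compl] at h1
        exact h1 s'.2
      rw [pow_zero, Matrix.one_apply_ne hne] at hpos
      exact lt_irrefl 0 hpos
    · intro s s' hpos
      have heq : s = s' := by
        by_contra h
        have hne : s.1 ≠ s'.1 := fun hh => h (Subtype.ext hh)
        rw [pow_zero, Matrix.one_apply_ne hne] at hpos
        exact lt_irrefl 0 hpos
      subst heq
      exact ⟨0, by rw [pow_zero, Matrix.one_apply_eq]; norm_num⟩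
  | succ n ih =>
    obtain ⟨ihA, ihB⟩ := ih
    have hstep : ∀ x y : 𝒮, 0 < (P ^ (n + 1)) x y →
        ∃ u : 𝒮, 0 < P x u ∧ 0 < (P ^ n) u y := by
      intro x y hpos
      rw [pow_succ', Matrix.mul_apply] at hpos
      obtain ⟨u, hu⟩ := exists_pos_of_sum_pos hpos
      rcases mul_pos_iff.1 hu with ⟨h1, h2⟩ | ⟨h1, _⟩
      · exact ⟨u, h1, h2⟩
      · exact absurd h1 (not_lt.2 (hnn x u))
    constructor
    · -- part A
      intro t s' hpos
      obtain ⟨u, hPu, hPn⟩ := hstep t.1 s'.1 hpos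
      by_cases hu : u ∈ S
      · refine ⟨0, ⟨u, hu⟩, ?_, ?_⟩
        · rw [pow_zero, Matrix.one_mul]
          exact hPu
        · obtain ⟨j, hj⟩ := ihB ⟨u, hu⟩ s' hPn
          exact ⟨j, hj⟩
      · have hu' : u ∈ Sᶜ := Finset.mem_compl.2 hu
        obtain ⟨m, a, hma, j, hj⟩ := ihA ⟨u, hu'⟩ s' hPn
        refine ⟨m + 1, a, ?_, ⟨j, hj⟩⟩
        have hrw : subM P Sᶜ Sᶜ ^ (m + 1) * subM P Sᶜ S
            = subM P Sᶜ Sᶜ * (subM P Sᶜ Sᶜ ^ m * subM P Sᶜ S) := by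
          rw [pow_succ', Matrix.mul_assoc]
        rw [hrw, Matrix.mul_apply]
        have hterm : 0 < subM P Sᶜ Sᶜ t ⟨u, hu'⟩ * (subM P Sᶜ Sᶜ ^ m * subM P Sᶜ S) ⟨u, hu'⟩ a :=
          mul_pos hPu hma
        calc (0:ℝ) < subM P Sᶜ Sᶜ t ⟨u, hu'⟩ * (subM P Sᶜ Sᶜ ^ m * subM P Sᶜ S) ⟨u, hu'⟩ a := hterm
          _ ≤ ∑ t', subM P Sᶜ Sᶜ t t' * (subM P Sᶜ Sᶜ ^ m * subM P Sᶜ S) t' a :=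
            Finset.single_le_sum
              (fun t' _ => mul_nonneg (hnn t.1 t'.1) (exc_nonneg P S hnn m t' a))
              (Finset.mem_univ ⟨u, hu'⟩)
    · -- part B
      intro s s' hpos
      obtain ⟨u, hPu, hPn⟩ := hstep s.1 s'.1 hpos
      by_cases hu : u ∈ S
      · obtain ⟨m, hm⟩ := ihB ⟨u, hu⟩ s' hPn
        refine ⟨m + 1, ?_⟩
        rw [pow_succ', Matrix.mul_apply]
        have hQsa : 0 < Qmat P S s ⟨u, hu⟩ := lt_of_lt_of_le hPu (Q_ge_P P S hnn s ⟨u, hu⟩)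
        calc (0:ℝ) < Qmat P S s ⟨u, hu⟩ * (Qmat P S ^ m) ⟨u, hu⟩ s' := mul_pos hQsa hm
          _ ≤ ∑ b, Qmat P S s b * (Qmat P S ^ m) b s' :=
            Finset.single_le_sum (fun b _ => mul_nonneg (hQnn s b) (hQpow m b s'))
              (Finset.mem_univ (⟨u, hu⟩ : {x // x ∈ S}))
      · have hu' : u ∈ Sᶜ := Finset.mem_compl.2 hu
        obtain ⟨m, a, hma, j, hj⟩ := ihA ⟨u, hu'⟩ s' hPn
        have hQsa : 0 < Qmat P S s a := by
          apply lt_of_lt_of_le _ (Q_ge_exc P S hnn hsum m s a)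
          rw [Matrix.mul_apply]
          calc (0:ℝ) < subM P S Sᶜ s ⟨u, hu'⟩ * (subM P Sᶜ Sᶜ ^ m * subM P Sᶜ S) ⟨u, hu'⟩ a :=
              mul_pos hPu hma
            _ ≤ ∑ t', subM P S Sᶜ s t' * (subM P Sᶜ Sᶜ ^ m * subM P Sᶜ S) t' a :=
              Finset.single_le_sum
                (fun t' _ => mul_nonneg (hnn s.1 t'.1) (exc_nonneg P S hnn m t' a))
                (Finset.mem_univ ⟨u, hu'⟩)
        refine ⟨j + 1, ?_⟩
        rw [pow_succ', Matrix.mul_apply]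
        calc (0:ℝ) < Qmat P S s a * (Qmat P S ^ j) a s' := mul_pos hQsa hj
          _ ≤ ∑ b, Qmat P S s b * (Qmat P S ^ j) b s' :=
            Finset.single_le_sum (fun b _ => mul_nonneg (hQnn s b) (hQpow j b s'))
              (Finset.mem_univ a)

lemma Q_irred (hnn : ∀ i j, 0 ≤ P i j)
    (hirr : ∀ i j, ∃ k : ℕ, 0 < (P ^ k) i j)
    (hsum : ∀ t j : {x // x ∈ Sᶜ}, Summable fun k : ℕ => (subM P Sᶜ Sᶜ ^ k) t j) :
    ∀ i j : {x // x ∈ S}, ∃ k : ℕ, 0 < (Qmat P S ^ k) i j := by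
  intro i j
  obtain ⟨k, hk⟩ := hirr i.1 j.1
  exact (Q_reach P S hnn hsum k).2 i j hk

end aux

theorem observed_chain {𝒮 : Type*} [Fintype 𝒮] [DecidableEq 𝒮]
    (P : Matrix 𝒮 𝒮 ℝ)
    (hnn : ∀ i j, 0 ≤ P i j) (hrow : ∀ i, ∑ j, P i j = 1)
    (hirr : ∀ i j, ∃ k : ℕ, 0 < (P ^ k) i j)
    (π : 𝒮 → ℝ) (hπ0 : ∀ i, 0 ≤ π i) (hπ1 : ∑ i, π i = 1)
    (hstat : ∀ j, ∑ i, π i * P i j = π j)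
    (S : Finset 𝒮) (hS : S.Nonempty) :
    -- (i) the matrix series `N = Σ_k (P_{TT})^k` converges (entrywise)
    (∀ i j : {x // x ∈ Sᶜ}, Summable fun k : ℕ => (subM P Sᶜ Sᶜ ^ k) i j) ∧
    -- (ii) `Q` is row-stochastic and irreducible
    (∀ i j : {x // x ∈ S}, 0 ≤ Qmat P S i j) ∧
    (∀ i : {x // x ∈ S}, ∑ j : {x // x ∈ S}, Qmat P S i j = 1) ∧
    (∀ i j : {x // x ∈ S}, ∃ k : ℕ, 0 < (Qmat P S ^ k) i j) ∧
    -- (iii) `π̄ Q = π̄` where `π̄_s = π_s / Σ_{s' ∈ S} π_{s'}`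
    (∀ j : {x // x ∈ S}, ∑ i : {x // x ∈ S},
        (π i.1 / ∑ s' ∈ S, π s') * Qmat P S i j = π j.1 / ∑ s' ∈ S, π s') := by
  have hsum := sub_summable P hnn hrow hirr S hS
  refine ⟨hsum, Q_nonneg P S hnn, Q_row P S hnn hrow hsum, Q_irred P S hnn hirr hsum, ?_⟩
  intro j
  have hstatQ := pi_stat_Q P S hsum π hstat j
  calc ∑ i : {x // x ∈ S}, (π i.1 / ∑ s' ∈ S, π s') * Qmat P S i j
      = (∑ i : {x // x ∈ S}, π i.1 * Qmat P S i j) / ∑ s' ∈ S, π s' := by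
        rw [Finset.sum_div]
        congr 1
        ext i
        rw [div_mul_eq_mul_div]
    _ = π j.1 / ∑ s' ∈ S, π s' := by rw [hstatQ]
end

section
/- For every finite simple graph G with vertex set V and edge set E and every real β, the Ising partition function admits the high-temperature expansion Σ_{σ : V → {−1,+1}} exp(β Σ_{ij ∈ E} σ_i σ_j) = 2^{|V|} (cosh β)^{|E|} Σ_{A ∈ 𝒞(G)} (tanh β)^{|A|}, where 𝒞(G) = {A ⊆ E : every vertex has even degree in the spanning subgraph (V,A)} is the cycle space of G. -/
attribute [local instance] Classical.propDecidable

/-- For an Ising spin configuration `σ : V → {−1,+1}` (encoded as `V → ℤˣ`), the value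
`σ_i σ_j` on an (unordered) edge `{i,j}`. -/
def edgeTerm {V : Type*} (σ : V → ℤˣ) : Sym2 V → ℤ :=
  Sym2.lift ⟨fun i j => ((σ i * σ j : ℤˣ) : ℤ), fun i j => by simp [mul_comm]⟩

/-- The degree of the vertex `v` in the spanning subgraph `(V, A)`. -/
noncomputable def subDeg {V : Type*} (A : Finset (Sym2 V)) (v : V) : ℕ :=
  (A.filter fun e => v ∈ e).card

/-- The cycle space `𝒞(G)` of `G`: the subsets `A` of the edge set of `G` such that every
vertex has even degree in the spanning subgraph `(V, A)`. -/
noncomputable def cycleSpace {V : Type*} [Fintype V] (G : SimpleGraph V)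
    [DecidableRel G.Adj] : Finset (Finset (Sym2 V)) :=
  G.edgeFinset.powerset.filter fun A => ∀ v, Even (subDeg A v)

lemma sum_units_pow (d : ℕ) : ∑ u : ℤˣ, ((u:ℤ):ℝ)^d = if Even d then 2 else 0 := by
  have : (Finset.univ : Finset ℤˣ) = {1, -1} := by decide
  rw [this, Finset.sum_insert (by decide), Finset.sum_singleton]
  rcases Nat.even_or_odd d with h | h
  · norm_num [h, Even.neg_pow]
  · simp [h.neg_pow, Nat.not_even_iff_odd.2 h]

lemma exp_unit (β : ℝ) (u : ℤˣ) :
    Real.exp (β * (u:ℤ)) = ((u:ℤ):ℝ) * Real.sinh β + Real.cosh β := by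
  rcases Int.units_eq_one_or u with h | h <;> subst h <;>
    simp [Real.cosh_add_sinh, ← Real.cosh_sub_sinh] <;> ring_nf

lemma edgeTerm_eq {V : Type*} [Fintype V] (σ : V → ℤˣ) (e : Sym2 V) (he : ¬ e.IsDiag) :
    ((edgeTerm σ e : ℤ) : ℝ) = ∏ v : V, ((σ v : ℤ) : ℝ) ^ (if v ∈ e then 1 else 0) := by
  induction e with
  | _ i j =>
    classical
    have hij : i ≠ j := by simpa [Sym2.mk_isDiag_iff] using he
    have h1 : ∀ v : V, ((σ v : ℤ) : ℝ) ^ (if v ∈ s(i,j) then 1 else 0)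
        = (if v ∈ ({i,j} : Finset V) then ((σ v : ℤ) : ℝ) else 1) := by
      intro v; by_cases h : v ∈ s(i,j) <;> simp_all [Sym2.mem_iff]
    rw [Finset.prod_congr rfl fun v _ => h1 v, Finset.prod_ite_mem,
      Finset.univ_inter, Finset.prod_pair hij]
    simp [edgeTerm]

lemma prod_edgeTerm {V : Type*} [Fintype V] (σ : V → ℤˣ) (A : Finset (Sym2 V))
    (hA : ∀ e ∈ A, ¬ e.IsDiag) :
    ∏ e ∈ A, ((edgeTerm σ e : ℤ) : ℝ) = ∏ v : V, ((σ v : ℤ) : ℝ) ^ subDeg A v := by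
  classical
  rw [Finset.prod_congr rfl fun e heA => edgeTerm_eq σ e (hA e heA), Finset.prod_comm]
  refine Finset.prod_congr rfl fun v _ => ?_
  rw [Finset.prod_pow_eq_pow_sum]
  congr 1
  rw [subDeg, Finset.card_filter]

lemma char_sum {V : Type*} [Fintype V] [DecidableEq V] (d : V → ℕ) :
    ∑ σ : V → ℤˣ, ∏ v : V, ((σ v : ℤ) : ℝ) ^ d v
      = if (∀ v, Even (d v)) then (2:ℝ) ^ Fintype.card V else 0 := by
  classical
  rw [← Fintype.prod_sum (κ := fun _ : V => ℤˣ) fun v u => ((u:ℤ):ℝ) ^ d v]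
  rw [Finset.prod_congr rfl fun v _ => sum_units_pow (d v)]
  by_cases h : ∀ v, Even (d v)
  · simp [h, Finset.prod_const, Finset.card_univ]
  · push_neg at h
    obtain ⟨v, hv⟩ := h
    rw [if_neg (by push_neg; exact ⟨v, hv⟩)]
    exact Finset.prod_eq_zero (Finset.mem_univ v) (by simp [hv])

/-- High-temperature expansion of the Ising partition function:
`Σ_σ exp(β Σ_{ij∈E} σ_i σ_j) = 2^|V| (cosh β)^|E| Σ_{A ∈ 𝒞(G)} (tanh β)^|A|`. -/
theorem ising_high_temperature_expansion {V : Type*} [Fintype V] [DecidableEq V]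
    (G : SimpleGraph V) [DecidableRel G.Adj] (β : ℝ) :
    ∑ σ : V → ℤˣ, Real.exp (β * ∑ e ∈ G.edgeFinset, (edgeTerm σ e : ℝ)) =
      2 ^ Fintype.card V * Real.cosh β ^ G.edgeFinset.card *
        ∑ A ∈ cycleSpace G, Real.tanh β ^ A.card := by
  classical
  have hcosh : Real.cosh β ≠ 0 := (Real.cosh_pos (x := β)).ne'
  -- Step 1: expand exp of sum as product, then each factor linearly
  have step1 : ∀ σ : V → ℤˣ,
      Real.exp (β * ∑ e ∈ G.edgeFinset, (edgeTerm σ e : ℝ))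
        = ∏ e ∈ G.edgeFinset, (((edgeTerm σ e : ℤ):ℝ) * Real.sinh β + Real.cosh β) := by
    intro σ
    rw [Finset.mul_sum, Real.exp_sum]
    refine Finset.prod_congr rfl fun e he => ?_
    have : ∃ u : ℤˣ, (edgeTerm σ e : ℤ) = (u : ℤ) := by
      induction e with
      | _ i j => exact ⟨σ i * σ j, rfl⟩
    obtain ⟨u, hu⟩ := this
    rw [hu]; exact exp_unit β u
  simp only [step1]
  -- Step 2: binomial-type expansion over subsets
  have step2 : ∀ σ : V → ℤˣ,
      ∏ e ∈ G.edgeFinset, (((edgeTerm σ e : ℤ):ℝ) * Real.sinh β + Real.cosh β)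
        = ∑ A ∈ G.edgeFinset.powerset,
            (∏ e ∈ A, ((edgeTerm σ e : ℤ):ℝ)) * Real.sinh β ^ A.card
              * Real.cosh β ^ (G.edgeFinset.card - A.card) := by
    intro σ
    rw [Finset.prod_add]
    refine Finset.sum_congr rfl fun A hA => ?_
    rw [Finset.mem_powerset] at hA
    rw [Finset.prod_mul_distrib, Finset.prod_const, Finset.prod_const,
      Finset.card_sdiff_of_subset hA, mul_assoc]
  simp only [step2]
  rw [Finset.sum_comm]
  -- Step 3: character sum
  have step3 : ∀ A ∈ G.edgeFinset.powerset,
      ∑ σ : V → ℤˣ, (∏ e ∈ A, ((edgeTerm σ e : ℤ):ℝ)) * Real.sinh β ^ A.card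
          * Real.cosh β ^ (G.edgeFinset.card - A.card)
        = (if (∀ v, Even (subDeg A v)) then (2:ℝ) ^ Fintype.card V else 0)
            * Real.sinh β ^ A.card * Real.cosh β ^ (G.edgeFinset.card - A.card) := by
    intro A hA
    rw [Finset.mem_powerset] at hA
    rw [← Finset.sum_mul, ← Finset.sum_mul]
    congr 2
    have hdiag : ∀ e ∈ A, ¬ e.IsDiag := fun e he =>
      (G.not_isDiag_of_mem_edgeSet (by simpa [SimpleGraph.mem_edgeFinset] using hA he))
    rw [Finset.sum_congr rfl fun σ _ => prod_edgeTerm σ A hdiag]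
    exact char_sum _
  rw [Finset.sum_congr rfl step3]
  -- Step 4: collapse to cycle space and algebra
  rw [Finset.sum_congr rfl (fun A _ => by rw [ite_mul, ite_mul, zero_mul, zero_mul]),
    Finset.sum_ite, Finset.sum_const_zero, add_zero]
  rw [show G.edgeFinset.powerset.filter (fun A => ∀ v, Even (subDeg A v)) = cycleSpace G from rfl]
  rw [Finset.mul_sum]
  refine Finset.sum_congr rfl fun A hA => ?_
  have hsub : A ⊆ G.edgeFinset := by
    have h := Finset.mem_filter.1 hA
    exact Finset.mem_powerset.1 h.1
  have hle : A.card ≤ G.edgeFinset.card := Finset.card_le_card hsub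
  have hsinh : Real.sinh β = Real.tanh β * Real.cosh β := by
    rw [Real.tanh_eq_sinh_div_cosh, div_mul_cancel₀ _ hcosh]
  rw [hsinh, mul_pow]
  have : Real.cosh β ^ A.card * Real.cosh β ^ (G.edgeFinset.card - A.card)
      = Real.cosh β ^ G.edgeFinset.card := by
    rw [← pow_add, Nat.add_sub_cancel' hle]
  linear_combination 2 ^ Fintype.card V * Real.tanh β ^ A.card * this
end

section
/- Let G be a finite connected simple graph, w > 0, and F : [0,+∞] → [0,1] a function satisfying F(z) = z·F(1/z) for all z. Then the worm transition matrix P_w and the worm distribution π_w are in detailed balance: π_w(A,u,v) · P_w[(A,u,v) → (B,x,y)] = π_w(B,x,y) · P_w[(B,x,y) → (A,u,v)] for all states (A,u,v), (B,x,y) ∈ 𝒮. -/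
attribute [local instance] Classical.propDecidable

namespace Worm

/-- The degree of the vertex `x` in the spanning subgraph `(V, A)`. -/
noncomputable def subDeg {V : Type*} (A : Finset (Sym2 V)) (x : V) : ℕ :=
  (A.filter fun e => x ∈ e).card

/-- `(A,u,v)` is a worm state: `A ⊆ E`, and the set of odd-degree vertices of `(V,A)` is
`{u,v}` if `u ≠ v`, and is empty if `u = v`. -/
def IsWormState {V : Type*} [Fintype V] (G : SimpleGraph V) [DecidableRel G.Adj]
    (A : Finset (Sym2 V)) (u v : V) : Prop :=
  A ⊆ G.edgeFinset ∧ ∀ x, (Odd (subDeg A x) ↔ ((x = u ∨ x = v) ∧ u ≠ v))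

/-- The worm state space `𝒮`. -/
abbrev WSt {V : Type*} [Fintype V] (G : SimpleGraph V) [DecidableRel G.Adj] :=
  {p : Finset (Sym2 V) × V × V // IsWormState G p.1 p.2.1 p.2.2}

variable {V : Type*} [Fintype V] [DecidableEq V] (G : SimpleGraph V) [DecidableRel G.Adj]

/-- The off-diagonal worm transition probabilities: pick one of the two defects uniformly at
random (probability `1/2` each), say `u`; pick an edge `uu'` emanating from `u` uniformly at
random (probability `1/d_u`); the proposed move `(A,u,v) → (A △ uu', u', v)` is accepted with
probability `F(w)` if `uu' ∉ A` and `F(1/w)` if `uu' ∈ A`. -/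
noncomputable def offPw (w : ℝ) (F : ℝ → ℝ) : WSt G → WSt G → ℝ := fun st tt =>
  (∑ u' ∈ G.neighborFinset st.1.2.1,
    if tt.1.1 = symmDiff st.1.1 {s(st.1.2.1, u')} ∧ tt.1.2 = (u', st.1.2.2) then
      (1 / (2 * (G.degree st.1.2.1 : ℝ))) *
        (if s(st.1.2.1, u') ∈ st.1.1 then F w⁻¹ else F w)
    else 0) +
  (∑ v' ∈ G.neighborFinset st.1.2.2,
    if tt.1.1 = symmDiff st.1.1 {s(st.1.2.2, v')} ∧ tt.1.2 = (st.1.2.1, v') then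
      (1 / (2 * (G.degree st.1.2.2 : ℝ))) *
        (if s(st.1.2.2, v') ∈ st.1.1 then F w⁻¹ else F w)
    else 0)

/-- The worm transition matrix `P_w`: off-diagonal entries are given by `offPw`, and the
diagonal entries are fixed by the requirement that each row sums to `1`. -/
noncomputable def Pw (w : ℝ) (F : ℝ → ℝ) : Matrix (WSt G) (WSt G) ℝ := fun st tt =>
  if tt = st then 1 - ∑ tt' ∈ Finset.univ.erase st, offPw G w F st tt'
  else offPw G w F st tt

/-- The worm distribution `π_w(A,u,v) = d_u d_v w^{|A|} / Z_w`. -/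
noncomputable def piw (w : ℝ) : WSt G → ℝ := fun st =>
  ((G.degree st.1.2.1 : ℝ) * (G.degree st.1.2.2 : ℝ) * w ^ st.1.1.card) /
    ∑ tt : WSt G, (G.degree tt.1.2.1 : ℝ) * (G.degree tt.1.2.2 : ℝ) * w ^ tt.1.1.card

lemma symmDiff_singleton_mem {A : Finset (Sym2 V)} {e : Sym2 V} (h : e ∈ A) :
    symmDiff A {e} = A.erase e := by
  ext a
  by_cases ha : a = e <;> simp [Finset.mem_symmDiff, ha, h]

lemma symmDiff_singleton_not_mem {A : Finset (Sym2 V)} {e : Sym2 V} (h : e ∉ A) :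
    symmDiff A {e} = insert e A := by
  ext a
  by_cases ha : a = e <;> simp [Finset.mem_symmDiff, ha, h]

lemma mem_symmDiff_singleton_self {A : Finset (Sym2 V)} {e : Sym2 V} :
    e ∈ symmDiff A {e} ↔ e ∉ A := by
  simp [Finset.mem_symmDiff]

lemma sum_collapse1 (s : Finset V) (q : V × V) (y : V) (C : V → Prop) (f : V → ℝ)
    [inst : ∀ u', Decidable (C u' ∧ q = (u', y))] :
    (∑ u' ∈ s, if C u' ∧ q = (u', y) then f u' else 0)
      = if q.1 ∈ s ∧ (C q.1 ∧ q = (q.1, y)) then f q.1 else 0 := by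
  by_cases hmem : q.1 ∈ s
  · rw [Finset.sum_eq_single_of_mem q.1 hmem
      (fun u' _ hne => if_neg (fun h => hne (by rw [h.2])))]
    by_cases hc : C q.1 ∧ q = (q.1, y)
    · rw [if_pos hc, if_pos ⟨hmem, hc⟩]
    · rw [if_neg hc, if_neg (fun h => hc h.2)]
  · rw [Finset.sum_eq_zero, if_neg (fun h => hmem h.1)]
    intro u' hu'
    refine if_neg (fun h => hmem ?_)
    rw [h.2]; exact hu'

lemma sum_collapse2 (s : Finset V) (q : V × V) (x : V) (C : V → Prop) (f : V → ℝ)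
    [inst : ∀ v', Decidable (C v' ∧ q = (x, v'))] :
    (∑ v' ∈ s, if C v' ∧ q = (x, v') then f v' else 0)
      = if q.2 ∈ s ∧ (C q.2 ∧ q = (x, q.2)) then f q.2 else 0 := by
  by_cases hmem : q.2 ∈ s
  · rw [Finset.sum_eq_single_of_mem q.2 hmem
      (fun v' _ hne => if_neg (fun h => hne (by rw [h.2])))]
    by_cases hc : C q.2 ∧ q = (x, q.2)
    · rw [if_pos hc, if_pos ⟨hmem, hc⟩]
    · rw [if_neg hc, if_neg (fun h => hc h.2)]
  · rw [Finset.sum_eq_zero, if_neg (fun h => hmem h.1)]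
    intro v' hv'
    refine if_neg (fun h => hmem ?_)
    rw [h.2]; exact hv'

lemma offPw_eq (w : ℝ) (F : ℝ → ℝ) (st tt : WSt G) :
    offPw G w F st tt =
      (if tt.1.2.1 ∈ G.neighborFinset st.1.2.1 ∧
          (tt.1.1 = symmDiff st.1.1 {s(st.1.2.1, tt.1.2.1)} ∧
            tt.1.2 = (tt.1.2.1, st.1.2.2)) then
        (1 / (2 * (G.degree st.1.2.1 : ℝ))) *
          (if s(st.1.2.1, tt.1.2.1) ∈ st.1.1 then F w⁻¹ else F w)
      else 0) +
      (if tt.1.2.2 ∈ G.neighborFinset st.1.2.2 ∧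
          (tt.1.1 = symmDiff st.1.1 {s(st.1.2.2, tt.1.2.2)} ∧
            tt.1.2 = (st.1.2.1, tt.1.2.2)) then
        (1 / (2 * (G.degree st.1.2.2 : ℝ))) *
          (if s(st.1.2.2, tt.1.2.2) ∈ st.1.1 then F w⁻¹ else F w)
      else 0) := by
  unfold offPw
  rw [sum_collapse1 _ tt.1.2 st.1.2.2
        (fun u' => tt.1.1 = symmDiff st.1.1 {s(st.1.2.1, u')})
        (fun u' => (1 / (2 * (G.degree st.1.2.1 : ℝ))) *
          (if s(st.1.2.1, u') ∈ st.1.1 then F w⁻¹ else F w)),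
      sum_collapse2 _ tt.1.2 st.1.2.1
        (fun v' => tt.1.1 = symmDiff st.1.1 {s(st.1.2.2, v')})
        (fun v' => (1 / (2 * (G.degree st.1.2.2 : ℝ))) *
          (if s(st.1.2.2, v') ∈ st.1.1 then F w⁻¹ else F w))]

lemma core (w : ℝ) (hw : 0 < w) (F : ℝ → ℝ)
    (hF : ∀ z : ℝ, 0 ≤ z → F z = z * F z⁻¹)
    (a b c : ℝ) (ha : a ≠ 0) (hb : b ≠ 0)
    (A B : Finset (Sym2 V)) (e : Sym2 V) (hB : B = symmDiff A {e}) :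
    (a * c * w ^ A.card) * (1 / (2 * a) * (if e ∈ A then F w⁻¹ else F w))
      = (b * c * w ^ B.card) * (1 / (2 * b) * (if e ∈ B then F w⁻¹ else F w)) := by
  subst hB
  by_cases he : e ∈ A
  · rw [if_pos he, if_neg (by rw [mem_symmDiff_singleton_self]; exact fun h => h he),
      symmDiff_singleton_mem he, Finset.card_erase_of_mem he]
    have h1 : A.card - 1 + 1 = A.card :=
      Nat.succ_pred_eq_of_pos (Finset.card_pos.2 ⟨e, he⟩)
    rw [hF w hw.le, ← h1, pow_succ]
    field_simp
    ring_nf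
    rw [Nat.add_sub_cancel_left]
  · rw [if_neg he, if_pos (mem_symmDiff_singleton_self.2 he),
      symmDiff_singleton_not_mem he, Finset.card_insert_of_notMem he]
    rw [hF w hw.le, pow_succ]
    field_simp

lemma num_term1 (w : ℝ) (hw : 0 < w) (F : ℝ → ℝ)
    (hF : ∀ z : ℝ, 0 ≤ z → F z = z * F z⁻¹) (st tt : WSt G) :
    ((G.degree st.1.2.1 : ℝ) * (G.degree st.1.2.2 : ℝ) * w ^ st.1.1.card) *
      (if tt.1.2.1 ∈ G.neighborFinset st.1.2.1 ∧
          (tt.1.1 = symmDiff st.1.1 {s(st.1.2.1, tt.1.2.1)} ∧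
            tt.1.2 = (tt.1.2.1, st.1.2.2)) then
        (1 / (2 * (G.degree st.1.2.1 : ℝ))) *
          (if s(st.1.2.1, tt.1.2.1) ∈ st.1.1 then F w⁻¹ else F w)
      else 0)
    = ((G.degree tt.1.2.1 : ℝ) * (G.degree tt.1.2.2 : ℝ) * w ^ tt.1.1.card) *
      (if st.1.2.1 ∈ G.neighborFinset tt.1.2.1 ∧
          (st.1.1 = symmDiff tt.1.1 {s(tt.1.2.1, st.1.2.1)} ∧
            st.1.2 = (st.1.2.1, tt.1.2.2)) then
        (1 / (2 * (G.degree tt.1.2.1 : ℝ))) *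
          (if s(tt.1.2.1, st.1.2.1) ∈ tt.1.1 then F w⁻¹ else F w)
      else 0) := by
  by_cases hC : tt.1.2.1 ∈ G.neighborFinset st.1.2.1 ∧
      (tt.1.1 = symmDiff st.1.1 {s(st.1.2.1, tt.1.2.1)} ∧
        tt.1.2 = (tt.1.2.1, st.1.2.2))
  · obtain ⟨hadj, hB, hy⟩ := hC
    have hadj' : G.Adj st.1.2.1 tt.1.2.1 := (G.mem_neighborFinset _ _).1 hadj
    have hyv : tt.1.2.2 = st.1.2.2 := by rw [hy]
    have hC' : st.1.2.1 ∈ G.neighborFinset tt.1.2.1 ∧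
        (st.1.1 = symmDiff tt.1.1 {s(tt.1.2.1, st.1.2.1)} ∧
          st.1.2 = (st.1.2.1, tt.1.2.2)) := by
      refine ⟨(G.mem_neighborFinset _ _).2 hadj'.symm, ?_, ?_⟩
      · rw [show s(tt.1.2.1, st.1.2.1) = s(st.1.2.1, tt.1.2.1) from Sym2.eq_swap, hB,
          symmDiff_symmDiff_cancel_right]
      · rw [hyv]
    rw [if_pos ⟨hadj, hB, hy⟩, if_pos hC']
    have hdu : (G.degree st.1.2.1 : ℝ) ≠ 0 := by
      have : 0 < G.degree st.1.2.1 := (G.degree_pos_iff_exists_adj _).2 ⟨_, hadj'⟩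
      positivity
    have hdx : (G.degree tt.1.2.1 : ℝ) ≠ 0 := by
      have : 0 < G.degree tt.1.2.1 := (G.degree_pos_iff_exists_adj _).2 ⟨_, hadj'.symm⟩
      positivity
    rw [show s(tt.1.2.1, st.1.2.1) = s(st.1.2.1, tt.1.2.1) from Sym2.eq_swap, hyv]
    exact core w hw F hF _ _ _ hdu hdx st.1.1 tt.1.1 _ hB
  · have hC' : ¬ (st.1.2.1 ∈ G.neighborFinset tt.1.2.1 ∧
        (st.1.1 = symmDiff tt.1.1 {s(tt.1.2.1, st.1.2.1)} ∧
          st.1.2 = (st.1.2.1, tt.1.2.2))) := by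
      rintro ⟨hadj, hB, hy⟩
      refine hC ⟨?_, ?_, ?_⟩
      · exact (G.mem_neighborFinset _ _).2 ((G.mem_neighborFinset _ _).1 hadj).symm
      · rw [show s(st.1.2.1, tt.1.2.1) = s(tt.1.2.1, st.1.2.1) from Sym2.eq_swap, hB,
          symmDiff_symmDiff_cancel_right]
      · have h2 : st.1.2.2 = tt.1.2.2 := by rw [hy]
        rw [h2]
    rw [if_neg hC, if_neg hC', mul_zero, mul_zero]

lemma num_term2 (w : ℝ) (hw : 0 < w) (F : ℝ → ℝ)
    (hF : ∀ z : ℝ, 0 ≤ z → F z = z * F z⁻¹) (st tt : WSt G) :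
    ((G.degree st.1.2.1 : ℝ) * (G.degree st.1.2.2 : ℝ) * w ^ st.1.1.card) *
      (if tt.1.2.2 ∈ G.neighborFinset st.1.2.2 ∧
          (tt.1.1 = symmDiff st.1.1 {s(st.1.2.2, tt.1.2.2)} ∧
            tt.1.2 = (st.1.2.1, tt.1.2.2)) then
        (1 / (2 * (G.degree st.1.2.2 : ℝ))) *
          (if s(st.1.2.2, tt.1.2.2) ∈ st.1.1 then F w⁻¹ else F w)
      else 0)
    = ((G.degree tt.1.2.1 : ℝ) * (G.degree tt.1.2.2 : ℝ) * w ^ tt.1.1.card) *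
      (if st.1.2.2 ∈ G.neighborFinset tt.1.2.2 ∧
          (st.1.1 = symmDiff tt.1.1 {s(tt.1.2.2, st.1.2.2)} ∧
            st.1.2 = (tt.1.2.1, st.1.2.2)) then
        (1 / (2 * (G.degree tt.1.2.2 : ℝ))) *
          (if s(tt.1.2.2, st.1.2.2) ∈ tt.1.1 then F w⁻¹ else F w)
      else 0) := by
  by_cases hC : tt.1.2.2 ∈ G.neighborFinset st.1.2.2 ∧
      (tt.1.1 = symmDiff st.1.1 {s(st.1.2.2, tt.1.2.2)} ∧
        tt.1.2 = (st.1.2.1, tt.1.2.2))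
  · obtain ⟨hadj, hB, hy⟩ := hC
    have hadj' : G.Adj st.1.2.2 tt.1.2.2 := (G.mem_neighborFinset _ _).1 hadj
    have hxu : tt.1.2.1 = st.1.2.1 := by rw [hy]
    have hC' : st.1.2.2 ∈ G.neighborFinset tt.1.2.2 ∧
        (st.1.1 = symmDiff tt.1.1 {s(tt.1.2.2, st.1.2.2)} ∧
          st.1.2 = (tt.1.2.1, st.1.2.2)) := by
      refine ⟨(G.mem_neighborFinset _ _).2 hadj'.symm, ?_, ?_⟩
      · rw [show s(tt.1.2.2, st.1.2.2) = s(st.1.2.2, tt.1.2.2) from Sym2.eq_swap, hB,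
          symmDiff_symmDiff_cancel_right]
      · rw [hxu]
    rw [if_pos ⟨hadj, hB, hy⟩, if_pos hC']
    have hdv : (G.degree st.1.2.2 : ℝ) ≠ 0 := by
      have : 0 < G.degree st.1.2.2 := (G.degree_pos_iff_exists_adj _).2 ⟨_, hadj'⟩
      positivity
    have hdy : (G.degree tt.1.2.2 : ℝ) ≠ 0 := by
      have : 0 < G.degree tt.1.2.2 := (G.degree_pos_iff_exists_adj _).2 ⟨_, hadj'.symm⟩
      positivity
    rw [show s(tt.1.2.2, st.1.2.2) = s(st.1.2.2, tt.1.2.2) from Sym2.eq_swap, hxu,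
      mul_comm ((G.degree st.1.2.1 : ℝ)) ((G.degree st.1.2.2 : ℝ)),
      mul_comm ((G.degree st.1.2.1 : ℝ)) ((G.degree tt.1.2.2 : ℝ))]
    exact core w hw F hF _ _ _ hdv hdy st.1.1 tt.1.1 _ hB
  · have hC' : ¬ (st.1.2.2 ∈ G.neighborFinset tt.1.2.2 ∧
        (st.1.1 = symmDiff tt.1.1 {s(tt.1.2.2, st.1.2.2)} ∧
          st.1.2 = (tt.1.2.1, st.1.2.2))) := by
      rintro ⟨hadj, hB, hy⟩
      refine hC ⟨?_, ?_, ?_⟩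
      · exact (G.mem_neighborFinset _ _).2 ((G.mem_neighborFinset _ _).1 hadj).symm
      · rw [show s(st.1.2.2, tt.1.2.2) = s(tt.1.2.2, st.1.2.2) from Sym2.eq_swap, hB,
          symmDiff_symmDiff_cancel_right]
      · have h2 : st.1.2.1 = tt.1.2.1 := by rw [hy]
        rw [h2]
    rw [if_neg hC, if_neg hC', mul_zero, mul_zero]

/-- The worm transition matrix `P_w` and the worm distribution `π_w` are in detailed
balance. -/
theorem worm_detailed_balance (hconn : G.Connected) (w : ℝ) (hw : 0 < w)
    (F : ℝ → ℝ) (hF01 : ∀ z : ℝ, 0 ≤ z → F z ∈ Set.Icc (0 : ℝ) 1)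
    (hF : ∀ z : ℝ, 0 ≤ z → F z = z * F z⁻¹) :
    ∀ st tt : WSt G, piw G w st * Pw G w F st tt = piw G w tt * Pw G w F tt st := by
  intro st tt
  by_cases hst : tt = st
  · subst hst; rfl
  · have hst' : ¬ st = tt := fun h => hst h.symm
    simp only [Pw, if_neg hst, if_neg hst']
    simp only [piw]
    rw [div_mul_eq_mul_div, div_mul_eq_mul_div]
    congr 1
    rw [offPw_eq, offPw_eq, mul_add, mul_add,
      num_term1 G w hw F hF st tt, num_term2 G w hw F hF st tt]



end Worm
end

section
/- Let G be a finite connected simple graph, w > 0, and F : [0,+∞] → [0,1] a function satisfying F(z) = z·F(1/z) for all z. If F(w) > 0 and F(1/w) > 0, then the worm transition matrix P_w is irreducible on 𝒮: for all states s, t ∈ 𝒮 there exists n ≥ 0 with ((P_w)^n)_{s,t} > 0. -/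
attribute [local instance] Classical.propDecidable

namespace Worm

variable {V : Type*} [Fintype V] [DecidableEq V] (G : SimpleGraph V) [DecidableRel G.Adj]

open scoped symmDiff

/-! ### Auxiliary lemmas -/

lemma symmDiff_singleton_of_mem {α : Type*} [DecidableEq α] {A : Finset α} {e : α}
    (he : e ∈ A) : A ∆ {e} = A.erase e := by
  ext f; by_cases hf : f = e <;> simp [Finset.mem_symmDiff, *]

lemma symmDiff_singleton_of_not_mem {α : Type*} [DecidableEq α] {A : Finset α} {e : α}
    (he : e ∉ A) : A ∆ {e} = insert e A := by
  ext f; by_cases hf : f = e <;> simp [Finset.mem_symmDiff, *]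

lemma symmDiff_singleton_ne {α : Type*} [DecidableEq α] (A : Finset α) (e : α) :
    A ∆ {e} ≠ A := by
  intro h
  have := Finset.ext_iff.mp h e
  by_cases he : e ∈ A <;> simp [Finset.mem_symmDiff, he] at this

lemma odd_card_symmDiff_singleton {α : Type*} [DecidableEq α] (B : Finset α) (e : α) :
    Odd ((B ∆ {e}).card) ↔ ¬ Odd B.card := by
  by_cases he : e ∈ B
  · rw [symmDiff_singleton_of_mem he]
    have h1 : B.card = (B.erase e).card + 1 := (Finset.card_erase_add_one he).symm
    rw [h1]
    simp [Nat.odd_add_one, Nat.not_even_iff_odd]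
  · rw [symmDiff_singleton_of_not_mem he, Finset.card_insert_of_notMem he]
    simp [Nat.odd_add_one, Nat.not_even_iff_odd]

lemma odd_card_erase {α : Type*} [DecidableEq α] (B : Finset α) (e : α) (he : e ∈ B) :
    Odd ((B.erase e).card) ↔ ¬ Odd B.card := by
  have h1 : B.card = (B.erase e).card + 1 := (Finset.card_erase_add_one he).symm
  rw [h1]
  simp [Nat.odd_add_one, Nat.not_even_iff_odd]

lemma odd_card_insert {α : Type*} [DecidableEq α] (B : Finset α) (e : α) (he : e ∉ B) :
    Odd ((insert e B).card) ↔ ¬ Odd B.card := by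
  rw [Finset.card_insert_of_notMem he]
  simp [Nat.odd_add_one, Nat.not_even_iff_odd]

lemma subDeg_symmDiff_mem {V : Type*} [DecidableEq V] (A : Finset (Sym2 V)) (e : Sym2 V)
    (x : V) (hx : x ∈ e) :
    Odd (subDeg (A ∆ {e}) x) ↔ ¬ Odd (subDeg A x) := by
  unfold subDeg
  by_cases he : e ∈ A
  · rw [symmDiff_singleton_of_mem he, Finset.filter_erase]
    refine odd_card_erase _ e ?_
    simp [Finset.mem_filter, he, hx]
  · rw [symmDiff_singleton_of_not_mem he, Finset.filter_insert, if_pos hx]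
    refine odd_card_insert _ e ?_
    simp [Finset.mem_filter, he]

lemma subDeg_symmDiff_not_mem {V : Type*} [DecidableEq V] (A : Finset (Sym2 V)) (e : Sym2 V)
    (x : V) (hx : x ∉ e) :
    subDeg (A ∆ {e}) x = subDeg A x := by
  unfold subDeg
  refine congrArg Finset.card ?_
  ext f
  by_cases hf : f = e
  · subst hf; simp [Finset.mem_filter, hx]
  · simp [Finset.mem_filter, Finset.mem_symmDiff, hf]

lemma exists_incident {V : Type*} [DecidableEq V] {A : Finset (Sym2 V)} {x : V}
    (hodd : Odd (subDeg A x)) : ∃ e ∈ A, x ∈ e := by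
  have hpos : 0 < subDeg A x := hodd.pos
  unfold subDeg at hpos
  obtain ⟨e, he⟩ := Finset.card_pos.mp hpos
  simp only [Finset.mem_filter] at he
  exact ⟨e, he.1, he.2⟩

lemma isWormState_comm {A : Finset (Sym2 V)} {u v : V} (h : IsWormState G A u v) :
    IsWormState G A v u := by
  refine ⟨h.1, fun x => ?_⟩
  rw [h.2 x]
  constructor
  · rintro ⟨hor, hne⟩; exact ⟨hor.symm, hne.symm⟩
  · rintro ⟨hor, hne⟩; exact ⟨hor.symm, hne.symm⟩

lemma isWormState_empty (x : V) : IsWormState G ∅ x x := by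
  refine ⟨Finset.empty_subset _, fun y => ?_⟩
  simp [subDeg]

lemma step_valid {A : Finset (Sym2 V)} {u v u' : V} (h : IsWormState G A u v)
    (hadj : G.Adj u u') : IsWormState G (A ∆ {s(u, u')}) u' v := by
  obtain ⟨hsub, hodd⟩ := h
  have huu' : u ≠ u' := hadj.ne
  refine ⟨?_, fun x => ?_⟩
  · intro f hf
    rw [Finset.mem_symmDiff] at hf
    rcases hf with ⟨hfA, _⟩ | ⟨hfe, _⟩
    · exact hsub hfA
    · rw [Finset.mem_singleton] at hfe
      subst hfe
      exact SimpleGraph.mem_edgeFinset.mpr hadj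
  · have hmem : x ∈ s(u, u') ↔ (x = u ∨ x = u') := Sym2.mem_iff
    by_cases hx : x ∈ s(u, u')
    · rw [subDeg_symmDiff_mem _ _ _ hx, hodd x]
      rw [hmem] at hx
      rcases hx with rfl | rfl
      · constructor
        · intro hn
          by_contra hq
          rcases Decidable.em (x = v) with rfl | hxv
          · exact hn ⟨Or.inr rfl, fun hx' => hq ⟨Or.inr rfl, Ne.symm huu'⟩⟩
          · exact hn ⟨Or.inl rfl, fun h' => hxv h'⟩
        · rintro ⟨hor, hne⟩ ⟨_, hne2⟩
          rcases hor with rfl | rfl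
          · exact huu' rfl
          · exact hne2 rfl
      · constructor
        · intro hn
          refine ⟨Or.inl rfl, fun hxv => ?_⟩
          subst hxv
          rcases Decidable.em (u = x) with rfl | huv
          · exact huu' rfl
          · exact hn ⟨Or.inr rfl, huv⟩
        · rintro ⟨_, hne⟩ ⟨hor, hne2⟩
          rcases hor with rfl | rfl
          · exact huu' rfl
          · exact hne rfl
    · rw [subDeg_symmDiff_not_mem _ _ _ hx, hodd x]
      rw [hmem] at hx
      push_neg at hx
      constructor
      · rintro ⟨hor, hne⟩
        rcases hor with rfl | rfl
        · exact absurd rfl hx.1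
        · exact ⟨Or.inr rfl, fun h' => hx.2 h'.symm⟩
      · rintro ⟨hor, hne⟩
        rcases hor with rfl | rfl
        · exact absurd rfl hx.2
        · exact ⟨Or.inr rfl, fun h' => hx.1 h'.symm⟩

lemma step_validV {A : Finset (Sym2 V)} {u v v' : V} (h : IsWormState G A u v)
    (hadj : G.Adj v v') : IsWormState G (A ∆ {s(v, v')}) u v' :=
  isWormState_comm G (step_valid G (isWormState_comm G h) hadj)

/-! ### The step relation -/

/-- An elementary worm move. -/
def Step (st tt : WSt G) : Prop :=
  (∃ u', G.Adj st.1.2.1 u' ∧ tt.1.1 = st.1.1 ∆ {s(st.1.2.1, u')} ∧ tt.1.2 = (u', st.1.2.2)) ∨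
  (∃ v', G.Adj st.1.2.2 v' ∧ tt.1.1 = st.1.1 ∆ {s(st.1.2.2, v')} ∧ tt.1.2 = (st.1.2.1, v'))

lemma step_symm {st tt : WSt G} (h : Step G st tt) : Step G tt st := by
  rcases h with ⟨u', hadj, hA, hp⟩ | ⟨v', hadj, hA, hp⟩
  · left
    refine ⟨st.1.2.1, ?_, ?_, ?_⟩
    · rw [hp]; exact hadj.symm
    · rw [hp, hA]
      show st.1.1 = (st.1.1 ∆ {s(st.1.2.1, u')}) ∆ {s(u', st.1.2.1)}
      rw [Sym2.eq_swap, symmDiff_symmDiff_cancel_right]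
    · rw [hp]
  · right
    refine ⟨st.1.2.2, ?_, ?_, ?_⟩
    · rw [hp]; exact hadj.symm
    · rw [hp, hA]
      show st.1.1 = (st.1.1 ∆ {s(st.1.2.2, v')}) ∆ {s(v', st.1.2.2)}
      rw [Sym2.eq_swap, symmDiff_symmDiff_cancel_right]
    · rw [hp]

lemma step_ne {st tt : WSt G} (h : Step G st tt) : tt ≠ st := by
  rcases h with ⟨u', _, hA, _⟩ | ⟨v', _, hA, _⟩ <;>
    exact fun h' => symmDiff_singleton_ne st.1.1 _ (by rw [← hA, h'])

/-! ### Positivity and nonnegativity of `Pw` -/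

section Positivity

variable (w : ℝ) (F : ℝ → ℝ) (hw : 0 < w)
  (hF01 : ∀ z : ℝ, 0 ≤ z → F z ∈ Set.Icc (0 : ℝ) 1)

include hw hF01 in
lemma Fval_nonneg (A : Finset (Sym2 V)) (e : Sym2 V) :
    0 ≤ (if e ∈ A then F w⁻¹ else F w) := by
  split
  · exact (hF01 w⁻¹ (inv_nonneg.mpr hw.le)).1
  · exact (hF01 w hw.le).1

include hw hF01 in
lemma Fval_le_one (A : Finset (Sym2 V)) (e : Sym2 V) :
    (if e ∈ A then F w⁻¹ else F w) ≤ 1 := by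
  split
  · exact (hF01 w⁻¹ (inv_nonneg.mpr hw.le)).2
  · exact (hF01 w hw.le).2

include hw hF01 in
lemma offPw_nonneg (st tt : WSt G) : 0 ≤ offPw G w F st tt := by
  unfold offPw
  refine add_nonneg (Finset.sum_nonneg fun u' _ => ?_) (Finset.sum_nonneg fun v' _ => ?_) <;>
  · split
    · exact mul_nonneg (by positivity) (Fval_nonneg w F hw hF01 _ _)
    · exact le_refl 0

lemma sum_ite_val_eq_le {p : ℝ} (hp : 0 ≤ p) (X : Finset (Sym2 V) × V × V) :
    (∑ tt' : WSt G, if tt'.1 = X then p else 0) ≤ p := by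
  by_cases h : ∃ t0 : WSt G, t0.1 = X
  · obtain ⟨t0, ht0⟩ := h
    have heq : ∀ tt' : WSt G, (tt'.1 = X) ↔ tt' = t0 := fun tt' =>
      ⟨fun h' => Subtype.ext (h'.trans ht0.symm), fun h' => h' ▸ ht0⟩
    calc (∑ tt' : WSt G, if tt'.1 = X then p else 0)
        = ∑ tt' : WSt G, if tt' = t0 then p else 0 :=
          Finset.sum_congr rfl fun tt' _ => if_congr (heq tt') rfl rfl
      _ ≤ p := by rw [Finset.sum_ite_eq' Finset.univ t0 fun _ => p]; simp
  · have hne : ∀ tt' : WSt G, ¬ (tt'.1 = X) := fun tt' h' => h ⟨tt', h'⟩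
    simp only [hne, if_false, Finset.sum_const_zero]
    exact hp

include hw hF01 in
lemma half_bound (z : V) (A : Finset (Sym2 V)) (g : V → V × V) :
    (∑ tt' : WSt G, ∑ y ∈ G.neighborFinset z,
      if tt'.1.1 = A ∆ {s(z, y)} ∧ tt'.1.2 = g y then
        (1 / (2 * (G.degree z : ℝ))) * (if s(z, y) ∈ A then F w⁻¹ else F w)
      else 0) ≤ 1 / 2 := by
  rw [Finset.sum_comm]
  have hterm : ∀ y ∈ G.neighborFinset z,
      (∑ tt' : WSt G, if tt'.1.1 = A ∆ {s(z, y)} ∧ tt'.1.2 = g y then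
        (1 / (2 * (G.degree z : ℝ))) * (if s(z, y) ∈ A then F w⁻¹ else F w)
      else 0) ≤ 1 / (2 * (G.degree z : ℝ)) := by
    intro y _
    have h1 : ∀ tt' : WSt G,
        (tt'.1.1 = A ∆ {s(z, y)} ∧ tt'.1.2 = g y) ↔ tt'.1 = (A ∆ {s(z, y)}, g y) := by
      intro tt'
      constructor
      · rintro ⟨h1, h2⟩; exact Prod.ext h1 h2
      · intro h'; exact ⟨congrArg Prod.fst h', congrArg Prod.snd h'⟩
    calc (∑ tt' : WSt G, if tt'.1.1 = A ∆ {s(z, y)} ∧ tt'.1.2 = g y then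
            (1 / (2 * (G.degree z : ℝ))) * (if s(z, y) ∈ A then F w⁻¹ else F w) else 0)
        = ∑ tt' : WSt G, if tt'.1 = (A ∆ {s(z, y)}, g y) then
            (1 / (2 * (G.degree z : ℝ))) * (if s(z, y) ∈ A then F w⁻¹ else F w) else 0 :=
          Finset.sum_congr rfl fun tt' _ => if_congr (h1 tt') rfl rfl
      _ ≤ (1 / (2 * (G.degree z : ℝ))) * (if s(z, y) ∈ A then F w⁻¹ else F w) :=
          sum_ite_val_eq_le G (mul_nonneg (by positivity) (Fval_nonneg w F hw hF01 _ _)) _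
      _ ≤ (1 / (2 * (G.degree z : ℝ))) * 1 := by
          refine mul_le_mul_of_nonneg_left (Fval_le_one w F hw hF01 _ _) (by positivity)
      _ = 1 / (2 * (G.degree z : ℝ)) := mul_one _
  calc (∑ y ∈ G.neighborFinset z, ∑ tt' : WSt G,
        if tt'.1.1 = A ∆ {s(z, y)} ∧ tt'.1.2 = g y then
          (1 / (2 * (G.degree z : ℝ))) * (if s(z, y) ∈ A then F w⁻¹ else F w) else 0)
      ≤ ∑ _y ∈ G.neighborFinset z, 1 / (2 * (G.degree z : ℝ)) := Finset.sum_le_sum hterm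
    _ = (G.degree z : ℝ) * (1 / (2 * (G.degree z : ℝ))) := by
        rw [Finset.sum_const, nsmul_eq_mul, SimpleGraph.card_neighborFinset_eq_degree]
    _ ≤ 1 / 2 := by
        rcases Nat.eq_zero_or_pos (G.degree z) with h0 | h0
        · rw [h0]; norm_num
        · have : (0 : ℝ) < (G.degree z : ℝ) := by exact_mod_cast h0
          rw [mul_one_div, div_le_div_iff₀ (by positivity) (by norm_num)]
          ring_nf
          nlinarith

include hw hF01 in
lemma offPw_row_le (st : WSt G) : ∑ tt' : WSt G, offPw G w F st tt' ≤ 1 := by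
  unfold offPw
  rw [Finset.sum_add_distrib]
  have h1 := half_bound G w F hw hF01 st.1.2.1 st.1.1 (fun u' => (u', st.1.2.2))
  have h2 := half_bound G w F hw hF01 st.1.2.2 st.1.1 (fun v' => (st.1.2.1, v'))
  linarith

include hw hF01 in
lemma Pw_nonneg (st tt : WSt G) : 0 ≤ Pw G w F st tt := by
  unfold Pw
  split
  · rw [sub_nonneg]
    calc ∑ tt' ∈ Finset.univ.erase st, offPw G w F st tt'
        ≤ ∑ tt' : WSt G, offPw G w F st tt' :=
          Finset.sum_le_sum_of_subset_of_nonneg (Finset.erase_subset _ _)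
            (fun i _ _ => offPw_nonneg G w F hw hF01 st i)
      _ ≤ 1 := offPw_row_le G w F hw hF01 st
  · exact offPw_nonneg G w F hw hF01 st tt

include hw hF01 in
lemma Pw_pow_nonneg (k : ℕ) (st tt : WSt G) : 0 ≤ (Pw G w F ^ k) st tt := by
  induction k generalizing st tt with
  | zero =>
    rw [pow_zero]
    rcases Decidable.em (st = tt) with rfl | hne
    · simp [Matrix.one_apply_eq]
    · rw [Matrix.one_apply_ne hne]
  | succ k ih =>
    rw [pow_succ, Matrix.mul_apply]
    exact Finset.sum_nonneg fun c _ => mul_nonneg (ih st c) (Pw_nonneg G w F hw hF01 c tt)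

variable (hFw : 0 < F w) (hFw' : 0 < F w⁻¹)

include hw hF01 hFw hFw' in
lemma step_pos {st tt : WSt G} (h : Step G st tt) : 0 < Pw G w F st tt := by
  rw [Pw, if_neg (step_ne G h)]
  have hFpos : ∀ (A : Finset (Sym2 V)) (e : Sym2 V),
      0 < (if e ∈ A then F w⁻¹ else F w) := by
    intro A e; split
    · exact hFw'
    · exact hFw
  unfold offPw
  rcases h with ⟨u', hadj, hA, hp⟩ | ⟨v', hadj, hA, hp⟩
  · refine add_pos_of_pos_of_nonneg ?_ (Finset.sum_nonneg fun y _ => ?_)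
    · refine Finset.sum_pos' (fun y _ => ?_) ⟨u', ?_, ?_⟩
      · split
        · exact mul_nonneg (by positivity) (Fval_nonneg w F hw hF01 _ _)
        · exact le_refl 0
      · exact (SimpleGraph.mem_neighborFinset G _ _).mpr hadj
      · rw [if_pos ⟨hA, hp⟩]
        have hdeg : 0 < G.degree st.1.2.1 :=
          Finset.card_pos.mpr ⟨u', (SimpleGraph.mem_neighborFinset G _ _).mpr hadj⟩
        have : (0 : ℝ) < (G.degree st.1.2.1 : ℝ) := by exact_mod_cast hdeg
        exact mul_pos (by positivity) (hFpos _ _)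
    · split
      · exact mul_nonneg (by positivity) (Fval_nonneg w F hw hF01 _ _)
      · exact le_refl 0
  · refine add_pos_of_nonneg_of_pos (Finset.sum_nonneg fun y _ => ?_) ?_
    · split
      · exact mul_nonneg (by positivity) (Fval_nonneg w F hw hF01 _ _)
      · exact le_refl 0
    · refine Finset.sum_pos' (fun y _ => ?_) ⟨v', ?_, ?_⟩
      · split
        · exact mul_nonneg (by positivity) (Fval_nonneg w F hw hF01 _ _)
        · exact le_refl 0
      · exact (SimpleGraph.mem_neighborFinset G _ _).mpr hadj
      · rw [if_pos ⟨hA, hp⟩]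
        have hdeg : 0 < G.degree st.1.2.2 :=
          Finset.card_pos.mpr ⟨v', (SimpleGraph.mem_neighborFinset G _ _).mpr hadj⟩
        have : (0 : ℝ) < (G.degree st.1.2.2 : ℝ) := by exact_mod_cast hdeg
        exact mul_pos (by positivity) (hFpos _ _)

include hw hF01 hFw hFw' in
lemma reach_pos {st tt : WSt G} (h : Relation.ReflTransGen (Step G) st tt) :
    ∃ k : ℕ, 0 < (Pw G w F ^ k) st tt := by
  induction h with
  | refl => exact ⟨0, by rw [pow_zero, Matrix.one_apply_eq]; norm_num⟩
  | tail _ hstep ih =>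
    obtain ⟨k, hk⟩ := ih
    refine ⟨k + 1, ?_⟩
    rw [pow_succ, Matrix.mul_apply]
    refine Finset.sum_pos'
      (fun c _ => mul_nonneg (Pw_pow_nonneg G w F hw hF01 k st c)
        (Pw_nonneg G w F hw hF01 c _))
      ⟨_, Finset.mem_univ _, mul_pos hk (step_pos G w F hw hF01 hFw hFw' hstep)⟩

end Positivity

/-! ### Reachability of the canonical state -/

lemma reach_empty_walk {x y : V} (p : G.Walk x y) :
    Relation.ReflTransGen (Step G) ⟨(∅, x, x), isWormState_empty G x⟩
      ⟨(∅, y, y), isWormState_empty G y⟩ := by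
  induction p with
  | nil => exact Relation.ReflTransGen.refl
  | @cons x x₁ y hadj q ih =>
    have h1 : IsWormState G ((∅ : Finset (Sym2 V)) ∆ {s(x, x₁)}) x₁ x :=
      step_valid G (isWormState_empty G x) hadj
    have s1 : Step G ⟨(∅, x, x), isWormState_empty G x⟩
        ⟨((∅ : Finset (Sym2 V)) ∆ {s(x, x₁)}, x₁, x), h1⟩ :=
      Or.inl ⟨x₁, hadj, rfl, rfl⟩
    have s2 : Step G ⟨((∅ : Finset (Sym2 V)) ∆ {s(x, x₁)}, x₁, x), h1⟩
        ⟨(∅, x₁, x₁), isWormState_empty G x₁⟩ :=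
      Or.inr ⟨x₁, hadj, (symmDiff_symmDiff_cancel_right _ _).symm, rfl⟩
    exact Relation.ReflTransGen.head s1 (Relation.ReflTransGen.head s2 ih)

lemma reach_canonical (hconn : G.Connected) (v0 : V) :
    ∀ (n : ℕ) (st : WSt G), st.1.1.card = n →
      Relation.ReflTransGen (Step G) st ⟨(∅, v0, v0), isWormState_empty G v0⟩ := by
  intro n
  induction n using Nat.strong_induction_on with
  | _ n IH =>
  rintro ⟨⟨A, u, v⟩, hst⟩ hcard
  simp only at hcard
  by_cases huv : u = v
  · subst huv
    by_cases hA : A = ∅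
    · subst hA
      exact reach_empty_walk G ((hconn u v0).some)
    · -- A nonempty even subgraph
      obtain ⟨e0, he0⟩ := Finset.nonempty_iff_ne_empty.mpr hA
      obtain ⟨a, ha⟩ : ∃ a, a ∈ e0 := ⟨e0.out.1, Sym2.out_fst_mem e0⟩
      -- removing an edge incident to the defect
      have incident_step : ∀ (x : V) (h : IsWormState G A x x) (e : Sym2 V),
          e ∈ A → x ∈ e →
          Relation.ReflTransGen (Step G) ⟨(A, x, x), h⟩
            ⟨(∅, v0, v0), isWormState_empty G v0⟩ := by
        intro x h e heA hxe
        obtain ⟨y, rfl⟩ := Sym2.mem_iff_exists.mp hxe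
        have hadj : G.Adj x y :=
          (SimpleGraph.mem_edgeSet G).mp (SimpleGraph.mem_edgeFinset.mp (h.1 heA))
        have s1 : Step G ⟨(A, x, x), h⟩
            ⟨(A ∆ {s(x, y)}, y, x), step_valid G h hadj⟩ :=
          Or.inl ⟨y, hadj, rfl, rfl⟩
        have hlt : (A ∆ {s(x, y)}).card < n := by
          rw [symmDiff_singleton_of_mem heA, ← hcard]
          exact Finset.card_erase_lt_of_mem heA
        exact Relation.ReflTransGen.head s1
          (IH _ hlt ⟨(A ∆ {s(x, y)}, y, x), step_valid G h hadj⟩ rfl)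
      have key : ∀ (x b : V) (p : G.Walk x b), (∃ e ∈ A, b ∈ e) →
          ∀ (h : IsWormState G A x x),
          Relation.ReflTransGen (Step G) ⟨(A, x, x), h⟩
            ⟨(∅, v0, v0), isWormState_empty G v0⟩ := by
        intro x b p
        induction p with
        | nil =>
          rintro ⟨e, heA, hxe⟩ h
          exact incident_step _ h e heA hxe
        | @cons x x₁ b hadj q ih =>
          intro hb h
          by_cases hx : ∃ e ∈ A, x ∈ e
          · obtain ⟨e, heA, hxe⟩ := hx
            exact incident_step _ h e heA hxe
          · have h1 : IsWormState G (A ∆ {s(x, x₁)}) x₁ x := step_valid G h hadj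
            have s1 : Step G ⟨(A, x, x), h⟩ ⟨(A ∆ {s(x, x₁)}, x₁, x), h1⟩ :=
              Or.inl ⟨x₁, hadj, rfl, rfl⟩
            have h2 : IsWormState G A x₁ x₁ := by
              have := step_validV G h1 hadj
              rwa [symmDiff_symmDiff_cancel_right] at this
            have s2 : Step G ⟨(A ∆ {s(x, x₁)}, x₁, x), h1⟩ ⟨(A, x₁, x₁), h2⟩ :=
              Or.inr ⟨x₁, hadj, (symmDiff_symmDiff_cancel_right _ _).symm, rfl⟩
            exact Relation.ReflTransGen.head s1
              (Relation.ReflTransGen.head s2 (ih hb h2))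
      exact key u a ((hconn u a).some) ⟨e0, he0, ha⟩ hst
  · -- u ≠ v : u has odd degree, remove an incident edge
    have hodd : Odd (subDeg A u) := (hst.2 u).mpr ⟨Or.inl rfl, huv⟩
    obtain ⟨e, heA, hue⟩ := exists_incident hodd
    obtain ⟨y, rfl⟩ := Sym2.mem_iff_exists.mp hue
    have hadj : G.Adj u y :=
      (SimpleGraph.mem_edgeSet G).mp (SimpleGraph.mem_edgeFinset.mp (hst.1 heA))
    have s1 : Step G ⟨(A, u, v), hst⟩
        ⟨(A ∆ {s(u, y)}, y, v), step_valid G hst hadj⟩ :=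
      Or.inl ⟨y, hadj, rfl, rfl⟩
    have hlt : (A ∆ {s(u, y)}).card < n := by
      rw [symmDiff_singleton_of_mem heA, ← hcard]
      exact Finset.card_erase_lt_of_mem heA
    exact Relation.ReflTransGen.head s1
      (IH _ hlt ⟨(A ∆ {s(u, y)}, y, v), step_valid G hst hadj⟩ rfl)

/-- If `F(w) > 0` and `F(1/w) > 0` then the worm transition matrix `P_w` is irreducible on
the worm state space `𝒮`. -/
theorem worm_irreducible (hconn : G.Connected) (w : ℝ) (hw : 0 < w)
    (F : ℝ → ℝ) (hF01 : ∀ z : ℝ, 0 ≤ z → F z ∈ Set.Icc (0 : ℝ) 1)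
    (hF : ∀ z : ℝ, 0 ≤ z → F z = z * F z⁻¹)
    (hFw : 0 < F w) (hFw' : 0 < F w⁻¹) :
    ∀ st tt : WSt G, ∃ k : ℕ, 0 < (Pw G w F ^ k) st tt := by
  intro st tt
  have : Nonempty V := hconn.nonempty
  set v0 := Classical.arbitrary V
  have h1 := reach_canonical G hconn v0 _ st rfl
  have h2 := reach_canonical G hconn v0 _ tt rfl
  have h2' : Relation.ReflTransGen (Step G) ⟨(∅, v0, v0), isWormState_empty G v0⟩ tt :=
    (by letI : Std.Symm (Step G) := ⟨fun _ _ h => step_symm G h⟩; exact Relation.ReflTransGen.symmetric.symm _ _ h2)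
  exact reach_pos G w F hw hF01 hFw hFw' (h1.trans h2')

end Worm
end

section
/- (Proposition 2, irreducibility part) The set ℛ is irreducible under P'_∞: for all states s, t ∈ ℛ one has s ↔ t. -/
attribute [local instance] Classical.propDecidable
set_option linter.unusedSectionVars false

namespace FPL

/-- Vertices of the brick-wall honeycomb lattice with periodic boundary conditions. -/
abbrev Vtx (m n : ℕ) := ZMod m × ZMod n

/-- Adjacency on the brick-wall honeycomb lattice: horizontal edges between `(i,j)` and
`(i+1,j)`, and vertical edges between `(i,j)` and `(i,j+1)` whenever `i+j` is even. -/
def HoneyAdj (m n : ℕ) (x y : Vtx m n) : Prop :=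
  (x.2 = y.2 ∧ (y.1 = x.1 + 1 ∨ x.1 = y.1 + 1)) ∨
  (x.1 = y.1 ∧ ((y.2 = x.2 + 1 ∧ Even (x.1.val + x.2.val)) ∨
                (x.2 = y.2 + 1 ∧ Even (y.1.val + y.2.val))))

variable (m n : ℕ) [NeZero m] [NeZero n]

/-- The edge set of the brick-wall honeycomb lattice. -/
noncomputable def honeyEdges : Finset (Sym2 (Vtx m n)) :=
  Finset.image (fun p : Vtx m n × Vtx m n => s(p.1, p.2))
    (Finset.univ.filter fun p => HoneyAdj m n p.1 p.2)

/-- `bdeg m n A x` is the degree of the vertex `x` in the spanning subgraph `(V, A)`. -/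
noncomputable def bdeg (A : Finset (Sym2 (Vtx m n))) (x : Vtx m n) : ℕ :=
  (A.filter fun e => x ∈ e).card

/-- `(A,u,v)` is a state of the worm chain: `A ⊆ E`, and the set of odd-degree vertices of
`(V,A)` is `{u,v}` if `u ≠ v`, and is empty if `u = v`. -/
def IsWormState (A : Finset (Sym2 (Vtx m n))) (u v : Vtx m n) : Prop :=
  A ⊆ honeyEdges m n ∧ ∀ x, (Odd (bdeg m n A x) ↔ ((x = u ∨ x = v) ∧ u ≠ v))

/-- The worm state space `𝒮`. -/
abbrev WormState := {p : Finset (Sym2 (Vtx m n)) × Vtx m n × Vtx m n //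
  IsWormState m n p.1 p.2.1 p.2.2}

/-- The set `ℛ` of states with no isolated vertices. -/
def FullSupport (st : WormState m n) : Prop := ∀ x : Vtx m n, bdeg m n st.1.1 x ≠ 0

/-- The fully-packed worm transition matrix `P'_∞`. -/
noncomputable def Pinf : Matrix (WormState m n) (WormState m n) ℝ := fun st tt =>
  if st.1.2.1 = st.1.2.2 then
    (if tt = st then (bdeg m n st.1.1 st.1.2.2 : ℝ) / 3 else 0) +
    (if ∃ v' : Vtx m n, HoneyAdj m n st.1.2.2 v' ∧ s(st.1.2.2, v') ∉ st.1.1 ∧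
        tt.1.1 = insert s(st.1.2.2, v') st.1.1 ∧
        ((tt.1.2.1 = v' ∧ tt.1.2.2 = st.1.2.2) ∨ (tt.1.2.1 = st.1.2.2 ∧ tt.1.2.2 = v'))
      then 1/6 else 0)
  else
    (if bdeg m n st.1.1 st.1.2.1 = 3 ∧ ∃ u' : Vtx m n, HoneyAdj m n st.1.2.1 u' ∧
        s(st.1.2.1, u') ∈ st.1.1 ∧ tt.1.1 = st.1.1.erase s(st.1.2.1, u') ∧
        tt.1.2.1 = u' ∧ tt.1.2.2 = st.1.2.2 then 1/6 else 0) +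
    (if bdeg m n st.1.1 st.1.2.1 = 1 ∧ ∃ u' : Vtx m n, HoneyAdj m n st.1.2.1 u' ∧
        s(st.1.2.1, u') ∉ st.1.1 ∧ tt.1.1 = insert s(st.1.2.1, u') st.1.1 ∧
        tt.1.2.1 = u' ∧ tt.1.2.2 = st.1.2.2 then 1/4 else 0) +
    (if bdeg m n st.1.1 st.1.2.2 = 3 ∧ ∃ v' : Vtx m n, HoneyAdj m n st.1.2.2 v' ∧
        s(st.1.2.2, v') ∈ st.1.1 ∧ tt.1.1 = st.1.1.erase s(st.1.2.2, v') ∧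
        tt.1.2.1 = st.1.2.1 ∧ tt.1.2.2 = v' then 1/6 else 0) +
    (if bdeg m n st.1.1 st.1.2.2 = 1 ∧ ∃ v' : Vtx m n, HoneyAdj m n st.1.2.2 v' ∧
        s(st.1.2.2, v') ∉ st.1.1 ∧ tt.1.1 = insert s(st.1.2.2, v') st.1.1 ∧
        tt.1.2.1 = st.1.2.1 ∧ tt.1.2.2 = v' then 1/4 else 0)

/-- `st → tt`: some power of `P'_∞` has positive `(st,tt)` entry. -/
def Reaches (st tt : WormState m n) : Prop := ∃ k : ℕ, 0 < (Pinf m n ^ k) st tt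

/-- `st ↔ tt`: mutual reachability. -/
def Comm (st tt : WormState m n) : Prop := Reaches m n st tt ∧ Reaches m n tt st

/-- The fully-packed configuration consisting of all horizontal edges. -/
noncomputable def Hconfig : Finset (Sym2 (Vtx m n)) :=
  Finset.image (fun p : Vtx m n => s(p, (p.1 + 1, p.2))) Finset.univ

lemma Pinf_nonneg (s t : WormState m n) : 0 ≤ Pinf m n s t := by
  unfold Pinf
  split_ifs <;> positivity

lemma Pinf_pow_nonneg : ∀ (k : ℕ) (s t : WormState m n), 0 ≤ (Pinf m n ^ k) s t := by
  intro k
  induction k with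
  | zero =>
    intro s t
    simp only [pow_zero, Matrix.one_apply]
    split_ifs <;> norm_num
  | succ k ih =>
    intro s t
    rw [pow_succ, Matrix.mul_apply]
    exact Finset.sum_nonneg fun c _ => mul_nonneg (ih s c) (Pinf_nonneg m n c t)

lemma reaches_refl (s : WormState m n) : Reaches m n s s :=
  ⟨0, by simp [Matrix.one_apply]⟩

lemma reaches_trans {s t u : WormState m n} (h1 : Reaches m n s t)
    (h2 : Reaches m n t u) : Reaches m n s u := by
  obtain ⟨a, ha⟩ := h1
  obtain ⟨b, hb⟩ := h2
  refine ⟨a + b, ?_⟩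
  rw [pow_add, Matrix.mul_apply]
  exact Finset.sum_pos'
    (fun c _ => mul_nonneg (Pinf_pow_nonneg m n a s c) (Pinf_pow_nonneg m n b c u))
    ⟨t, Finset.mem_univ t, mul_pos ha hb⟩

lemma reaches_of_pos {s t : WormState m n} (h : 0 < Pinf m n s t) : Reaches m n s t :=
  ⟨1, by rwa [pow_one]⟩

lemma comm_refl (s : WormState m n) : Comm m n s s := ⟨reaches_refl m n s, reaches_refl m n s⟩
lemma comm_symm {s t : WormState m n} (h : Comm m n s t) : Comm m n t s := ⟨h.2, h.1⟩
lemma comm_trans {s t u : WormState m n} (h1 : Comm m n s t) (h2 : Comm m n t u) :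
    Comm m n s u := ⟨reaches_trans m n h1.1 h2.1, reaches_trans m n h2.2 h1.2⟩


-- ============ basic bdeg lemmas ============

lemma bdeg_insert (A : Finset (Sym2 (Vtx m n))) {e : Sym2 (Vtx m n)} (he : e ∉ A)
    (x : Vtx m n) :
    bdeg m n (insert e A) x = bdeg m n A x + if x ∈ e then 1 else 0 := by
  unfold bdeg
  rw [Finset.filter_insert]
  split_ifs with h
  · rw [Finset.card_insert_of_notMem fun hc => he (Finset.mem_of_mem_filter _ hc)]
  · rw [add_zero]

lemma bdeg_erase (A : Finset (Sym2 (Vtx m n))) {e : Sym2 (Vtx m n)} (he : e ∈ A)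
    (x : Vtx m n) :
    bdeg m n (A.erase e) x + (if x ∈ e then 1 else 0) = bdeg m n A x := by
  unfold bdeg
  rw [Finset.filter_erase]
  split_ifs with h
  · exact Finset.card_erase_add_one (Finset.mem_filter.mpr ⟨he, h⟩)
  · rw [add_zero, Finset.erase_eq_of_notMem]
    intro hc
    exact h (Finset.mem_filter.mp hc).2

-- ============ ZMod parity helpers ============

section Par
variable {N : ℕ} [NeZero N]

lemma val_add_one_mod2 (hN : Even N) (hN2 : 2 ≤ N) (j : ZMod N) :
    (j + 1).val % 2 = (j.val + 1) % 2 := by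
  have h1 : (1 : ZMod N).val = 1 := by
    rw [ZMod.val_one_eq_one_mod, Nat.mod_eq_of_lt (by omega)]
  have h2 : (j + 1).val = (j.val + 1) % N := by rw [ZMod.val_add, h1]
  obtain ⟨k, hk⟩ := hN
  have : (2 : ℕ) ∣ N := ⟨k, by omega⟩
  rw [h2, Nat.mod_mod_of_dvd _ this]

lemma natCast_ne_zero' (a : ℕ) (ha : 0 < a) (haN : a < N) : ((a : ℕ) : ZMod N) ≠ 0 := by
  intro h
  have := ZMod.val_cast_of_lt haN
  rw [h, ZMod.val_zero] at this
  omega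

lemma one_ne_zero' (hN : 2 ≤ N) : (1 : ZMod N) ≠ 0 := by
  have := natCast_ne_zero' (N := N) 1 (by omega) (by omega)
  simpa using this

lemma two_ne_zero' (hN : 3 ≤ N) : (2 : ZMod N) ≠ 0 := by
  have := natCast_ne_zero' (N := N) 2 (by omega) (by omega)
  simpa using this

lemma add_one_ne (hN : 2 ≤ N) (j : ZMod N) : j + 1 ≠ j := by
  intro h
  have : (1 : ZMod N) = 0 := by linear_combination h
  exact one_ne_zero' hN this

lemma sub_one_ne (hN : 2 ≤ N) (j : ZMod N) : j - 1 ≠ j := by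
  intro h
  have : (1 : ZMod N) = 0 := by linear_combination -h
  exact one_ne_zero' hN this

lemma add_one_ne_sub_one (hN : 3 ≤ N) (j : ZMod N) : j + 1 ≠ j - 1 := by
  intro h
  have : (2 : ZMod N) = 0 := by linear_combination h
  exact two_ne_zero' hN this

end Par

-- ============ vertical neighbour ============

def vneigh (x : Vtx m n) : Vtx m n :=
  if Even (x.1.val + x.2.val) then (x.1, x.2 + 1) else (x.1, x.2 - 1)

variable {m n}
variable (hm : Even m) (hn : Even n) (hm4 : 4 ≤ m) (hn4 : 4 ≤ n)

lemma vneigh_fst (x : Vtx m n) : (vneigh m n x).1 = x.1 := by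
  unfold vneigh; split_ifs <;> rfl

include hn4 in
lemma vneigh_snd_ne (x : Vtx m n) : (vneigh m n x).2 ≠ x.2 := by
  unfold vneigh
  split_ifs <;> simp only
  · exact add_one_ne (by omega) _
  · exact sub_one_ne (by omega) _

include hn hn4 in
lemma honeyAdj_iff (x y : Vtx m n) :
    HoneyAdj m n x y ↔
      y = (x.1 + 1, x.2) ∨ y = (x.1 - 1, x.2) ∨ y = vneigh m n x := by
  constructor
  · rintro (⟨h2, h1 | h1⟩ | ⟨h1, ⟨h2, he⟩ | ⟨h2, he⟩⟩)
    · exact Or.inl (Prod.ext h1 h2.symm)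
    · exact Or.inr (Or.inl (Prod.ext (eq_sub_iff_add_eq.mpr h1.symm) h2.symm))
    · refine Or.inr (Or.inr ?_)
      rw [vneigh, if_pos he]
      exact Prod.ext h1.symm h2
    · refine Or.inr (Or.inr ?_)
      have hne : ¬ Even (x.1.val + x.2.val) := by
        have hpar := val_add_one_mod2 hn (by omega) y.2
        rw [← h2] at hpar
        have hx1 : x.1.val = y.1.val := by rw [h1]
        simp only [Nat.even_iff] at he ⊢
        omega
      rw [vneigh, if_neg hne]
      exact Prod.ext h1.symm (eq_sub_iff_add_eq.mpr h2.symm)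
  · rintro (rfl | rfl | rfl)
    · exact Or.inl ⟨rfl, Or.inl rfl⟩
    · exact Or.inl ⟨rfl, Or.inr (by simp)⟩
    · unfold vneigh
      split_ifs with he
      · exact Or.inr ⟨rfl, Or.inl ⟨rfl, he⟩⟩
      · refine Or.inr ⟨rfl, Or.inr ⟨by simp, ?_⟩⟩
        simp only
        have hpar := val_add_one_mod2 hn (by omega) (x.2 - 1)
        rw [sub_add_cancel] at hpar
        simp only [Nat.even_iff] at he ⊢
        omega

lemma honeyAdj_symm {x y : Vtx m n} (h : HoneyAdj m n x y) : HoneyAdj m n y x := by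
  rcases h with ⟨h2, h1 | h1⟩ | ⟨h1, ⟨h2, he⟩ | ⟨h2, he⟩⟩
  · exact Or.inl ⟨h2.symm, Or.inr h1⟩
  · exact Or.inl ⟨h2.symm, Or.inl h1⟩
  · exact Or.inr ⟨h1.symm, Or.inr ⟨h2, he⟩⟩
  · exact Or.inr ⟨h1.symm, Or.inl ⟨h2, he⟩⟩

include hm4 hn4 in
lemma honeyAdj_irrefl (x : Vtx m n) : ¬ HoneyAdj m n x x := by
  rintro (⟨-, h1 | h1⟩ | ⟨-, ⟨h2, -⟩ | ⟨h2, -⟩⟩)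
  · exact add_one_ne (N := m) (by omega) x.1 h1.symm
  · exact add_one_ne (N := m) (by omega) x.1 h1.symm
  · exact add_one_ne (N := n) (by omega) x.2 h2.symm
  · exact add_one_ne (N := n) (by omega) x.2 h2.symm

include hm4 hn4 in
lemma honeyAdj_ne {x y : Vtx m n} (h : HoneyAdj m n x y) : x ≠ y := by
  rintro rfl; exact honeyAdj_irrefl hm4 hn4 x h

lemma mem_honeyEdges {e : Sym2 (Vtx m n)} :
    e ∈ honeyEdges m n ↔ ∃ a b, HoneyAdj m n a b ∧ e = s(a, b) := by
  unfold honeyEdges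
  simp only [Finset.mem_image, Finset.mem_filter, Finset.mem_univ, true_and]
  constructor
  · rintro ⟨⟨a, b⟩, hab, rfl⟩; exact ⟨a, b, hab, rfl⟩
  · rintro ⟨a, b, hab, rfl⟩; exact ⟨(a, b), hab, rfl⟩

lemma honeyAdj_mem {x y : Vtx m n} (h : HoneyAdj m n x y) :
    s(x, y) ∈ honeyEdges m n := mem_honeyEdges.mpr ⟨x, y, h, rfl⟩

include hn hn4 in
lemma honey_filter (x : Vtx m n) :
    (honeyEdges m n).filter (fun e => x ∈ e) =
      {s(x, (x.1 + 1, x.2)), s(x, (x.1 - 1, x.2)), s(x, vneigh m n x)} := by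
  ext e
  simp only [Finset.mem_filter, Finset.mem_insert, Finset.mem_singleton]
  constructor
  · rintro ⟨he, hx⟩
    obtain ⟨a, b, hab, rfl⟩ := mem_honeyEdges.mp he
    rw [Sym2.mem_iff] at hx
    rcases hx with rfl | rfl
    · rcases (honeyAdj_iff hn hn4 x b).mp hab with rfl | rfl | rfl
      · exact Or.inl rfl
      · exact Or.inr (Or.inl rfl)
      · exact Or.inr (Or.inr rfl)
    · have hab' := honeyAdj_symm hab
      rcases (honeyAdj_iff hn hn4 x a).mp hab' with rfl | rfl | rfl
      · exact Or.inl Sym2.eq_swap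
      · exact Or.inr (Or.inl Sym2.eq_swap)
      · exact Or.inr (Or.inr Sym2.eq_swap)
  · have h1 : HoneyAdj m n x (x.1 + 1, x.2) :=
      (honeyAdj_iff hn hn4 x _).mpr (Or.inl rfl)
    have h2 : HoneyAdj m n x (x.1 - 1, x.2) :=
      (honeyAdj_iff hn hn4 x _).mpr (Or.inr (Or.inl rfl))
    have h3 : HoneyAdj m n x (vneigh m n x) :=
      (honeyAdj_iff hn hn4 x _).mpr (Or.inr (Or.inr rfl))
    rintro (rfl | rfl | rfl)
    · exact ⟨honeyAdj_mem h1, by simp⟩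
    · exact ⟨honeyAdj_mem h2, by simp⟩
    · exact ⟨honeyAdj_mem h3, by simp⟩

include hm hn hm4 hn4 in
lemma honey_filter_card (x : Vtx m n) :
    ((honeyEdges m n).filter (fun e => x ∈ e)).card = 3 := by
  rw [honey_filter hn hn4 x]
  have d12 : (x.1 + 1, x.2) ≠ ((x.1 - 1, x.2) : Vtx m n) := by
    intro h
    exact add_one_ne_sub_one (N := m) (by omega) x.1 (congrArg Prod.fst h)
  have d13 : (x.1 + 1, x.2) ≠ vneigh m n x := by
    intro h
    have := congrArg Prod.fst h
    rw [vneigh_fst] at this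
    exact add_one_ne (N := m) (by omega) x.1 this
  have d23 : (x.1 - 1, x.2) ≠ vneigh m n x := by
    intro h
    have := congrArg Prod.fst h
    rw [vneigh_fst] at this
    exact sub_one_ne (N := m) (by omega) x.1 this
  rw [Finset.card_insert_of_notMem, Finset.card_insert_of_notMem, Finset.card_singleton]
  · simp only [Finset.mem_singleton, Sym2.congr_right]
    exact d23
  · simp only [Finset.mem_insert, Finset.mem_singleton, Sym2.congr_right]
    push_neg
    exact ⟨d12, d13⟩



include hm hn hm4 hn4 in
lemma bdeg_le_three {A : Finset (Sym2 (Vtx m n))} (hA : A ⊆ honeyEdges m n)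
    (x : Vtx m n) : bdeg m n A x ≤ 3 := by
  rw [← honey_filter_card hm hn hm4 hn4 x]
  exact Finset.card_le_card (Finset.filter_subset_filter _ hA)

include hm hn hm4 hn4 in
lemma full_adj_mem {A : Finset (Sym2 (Vtx m n))} (hA : A ⊆ honeyEdges m n)
    {x : Vtx m n} (hd : bdeg m n A x = 3) {y : Vtx m n} (hxy : HoneyAdj m n x y) :
    s(x, y) ∈ A := by
  have hsub : A.filter (fun e => x ∈ e) ⊆ (honeyEdges m n).filter (fun e => x ∈ e) :=
    Finset.filter_subset_filter _ hA
  have heq : A.filter (fun e => x ∈ e) = (honeyEdges m n).filter (fun e => x ∈ e) :=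
    Finset.eq_of_subset_of_card_le hsub
      (by rw [honey_filter_card hm hn hm4 hn4 x]; unfold bdeg at hd; omega)
  have : s(x, y) ∈ A.filter (fun e => x ∈ e) := by
    rw [heq]
    exact Finset.mem_filter.mpr ⟨honeyAdj_mem hxy, by simp⟩
  exact (Finset.mem_filter.mp this).1

include hm hn hm4 hn4 in
lemma exists_absent {A : Finset (Sym2 (Vtx m n))} {x : Vtx m n}
    (hd : bdeg m n A x ≤ 2) : ∃ y, HoneyAdj m n x y ∧ s(x, y) ∉ A := by
  by_contra hc
  push_neg at hc
  have hsub : (honeyEdges m n).filter (fun e => x ∈ e) ⊆ A.filter (fun e => x ∈ e) := by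
    intro e he
    rw [honey_filter hn hn4 x] at he
    have h1 : HoneyAdj m n x (x.1 + 1, x.2) := (honeyAdj_iff hn hn4 x _).mpr (Or.inl rfl)
    have h2 : HoneyAdj m n x (x.1 - 1, x.2) :=
      (honeyAdj_iff hn hn4 x _).mpr (Or.inr (Or.inl rfl))
    have h3 : HoneyAdj m n x (vneigh m n x) :=
      (honeyAdj_iff hn hn4 x _).mpr (Or.inr (Or.inr rfl))
    simp only [Finset.mem_insert, Finset.mem_singleton] at he
    rcases he with rfl | rfl | rfl
    · exact Finset.mem_filter.mpr ⟨hc _ h1, by simp⟩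
    · exact Finset.mem_filter.mpr ⟨hc _ h2, by simp⟩
    · exact Finset.mem_filter.mpr ⟨hc _ h3, by simp⟩
  have := Finset.card_le_card hsub
  rw [honey_filter_card hm hn hm4 hn4 x] at this
  unfold bdeg at hd
  omega

lemma mem_Hconfig {e : Sym2 (Vtx m n)} :
    e ∈ Hconfig m n ↔ ∃ p : Vtx m n, e = s(p, (p.1 + 1, p.2)) := by
  unfold Hconfig
  simp only [Finset.mem_image, Finset.mem_univ, true_and]
  constructor
  · rintro ⟨p, rfl⟩; exact ⟨p, rfl⟩
  · rintro ⟨p, rfl⟩; exact ⟨p, rfl⟩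

lemma Hconfig_subset : Hconfig m n ⊆ honeyEdges m n := by
  intro e he
  obtain ⟨p, rfl⟩ := mem_Hconfig.mp he
  exact honeyAdj_mem (Or.inl ⟨rfl, Or.inl rfl⟩)

include hm hm4 in
lemma Hconfig_filter (x : Vtx m n) :
    (Hconfig m n).filter (fun e => x ∈ e) =
      {s(x, (x.1 + 1, x.2)), s(x, (x.1 - 1, x.2))} := by
  ext e
  simp only [Finset.mem_filter, Finset.mem_insert, Finset.mem_singleton]
  constructor
  · rintro ⟨he, hx⟩
    obtain ⟨p, rfl⟩ := mem_Hconfig.mp he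
    rw [Sym2.mem_iff] at hx
    rcases hx with rfl | rfl
    · exact Or.inl rfl
    · refine Or.inr ?_
      have hp : p = ((p.1 + 1, p.2).1 - 1, (p.1 + 1, p.2).2) := by
        refine Prod.ext ?_ rfl
        simp
      rw [Sym2.eq_swap]
      exact congrArg (fun q => s((p.1 + 1, p.2), q)) hp
  · rintro (rfl | rfl)
    · exact ⟨mem_Hconfig.mpr ⟨x, rfl⟩, by simp⟩
    · refine ⟨mem_Hconfig.mpr ⟨(x.1 - 1, x.2), ?_⟩, by simp⟩
      have hx : (((x.1 - 1, x.2) : Vtx m n).1 + 1, ((x.1 - 1, x.2) : Vtx m n).2) = x := by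
        exact Prod.ext (by simp) rfl
      rw [hx, Sym2.eq_swap]

include hm hm4 in
lemma bdeg_Hconfig (x : Vtx m n) : bdeg m n (Hconfig m n) x = 2 := by
  unfold bdeg
  rw [Hconfig_filter hm hm4 x]
  rw [Finset.card_insert_of_notMem, Finset.card_singleton]
  simp only [Finset.mem_singleton, Sym2.congr_right]
  intro h
  exact add_one_ne_sub_one (N := m) (by omega) x.1 (congrArg Prod.fst h)

include hn4 in
lemma vertical_not_Hconfig (x : Vtx m n) : s(x, vneigh m n x) ∉ Hconfig m n := by
  intro h
  obtain ⟨p, hp⟩ := mem_Hconfig.mp h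
  rw [Sym2.eq_iff] at hp
  have := vneigh_snd_ne hn4 x
  rcases hp with ⟨h1, h2⟩ | ⟨h1, h2⟩
  · rw [h2] at this
    rw [h1] at this
    exact this rfl
  · rw [h2] at this
    rw [h1] at this
    exact this rfl

include hm hm4 in
lemma exists_absent_horizontal {A : Finset (Sym2 (Vtx m n))} {x : Vtx m n}
    (hd : bdeg m n A x ≤ 1) :
    ∃ y, HoneyAdj m n x y ∧ s(x, y) ∈ Hconfig m n ∧ s(x, y) ∉ A := by
  have h1 : HoneyAdj m n x (x.1 + 1, x.2) := Or.inl ⟨rfl, Or.inl rfl⟩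
  have h2 : HoneyAdj m n x (x.1 - 1, x.2) := Or.inl ⟨rfl, Or.inr (by simp)⟩
  have hm1 : s(x, (x.1 + 1, x.2)) ∈ Hconfig m n := mem_Hconfig.mpr ⟨x, rfl⟩
  have hm2 : s(x, (x.1 - 1, x.2)) ∈ Hconfig m n := by
    refine mem_Hconfig.mpr ⟨(x.1 - 1, x.2), ?_⟩
    have hx : (((x.1 - 1, x.2) : Vtx m n).1 + 1, ((x.1 - 1, x.2) : Vtx m n).2) = x := by
      exact Prod.ext (by simp) rfl
    rw [hx, Sym2.eq_swap]
  by_cases c1 : s(x, (x.1 + 1, x.2)) ∈ A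
  · by_cases c2 : s(x, (x.1 - 1, x.2)) ∈ A
    · exfalso
      have hsub : ({s(x, (x.1 + 1, x.2)), s(x, (x.1 - 1, x.2))} : Finset (Sym2 (Vtx m n)))
          ⊆ A.filter (fun e => x ∈ e) := by
        intro e he
        simp only [Finset.mem_insert, Finset.mem_singleton] at he
        rcases he with rfl | rfl
        · exact Finset.mem_filter.mpr ⟨c1, by simp⟩
        · exact Finset.mem_filter.mpr ⟨c2, by simp⟩
      have hcard := Finset.card_le_card hsub
      rw [Finset.card_insert_of_notMem, Finset.card_singleton] at hcard
      · unfold bdeg at hd; omega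
      · simp only [Finset.mem_singleton, Sym2.congr_right]
        intro h
        exact add_one_ne_sub_one (N := m) (by omega) x.1 (congrArg Prod.fst h)
    · exact ⟨_, h2, hm2, c2⟩
  · exact ⟨_, h1, hm1, c1⟩

-- ============ connectivity ============

lemma zmod_cast_val {N : ℕ} [NeZero N] (a : ZMod N) : ((a.val : ℕ) : ZMod N) = a :=
  ZMod.natCast_rightInverse a

lemma hrel_row (x : Vtx m n) (k : ℕ) :
    Relation.ReflTransGen (HoneyAdj m n) x (x.1 + (k : ZMod m), x.2) := by
  induction k with
  | zero =>
    simp only [Nat.cast_zero, add_zero]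
    exact Relation.ReflTransGen.refl
  | succ k ih =>
    refine ih.tail ?_
    have : x.1 + ((k + 1 : ℕ) : ZMod m) = (x.1 + (k : ZMod m)) + 1 := by
      push_cast; ring
    rw [this]
    exact Or.inl ⟨rfl, Or.inl rfl⟩

lemma hrel_row' (x : Vtx m n) (i : ZMod m) :
    Relation.ReflTransGen (HoneyAdj m n) x (i, x.2) := by
  have := hrel_row x (i - x.1).val
  rwa [zmod_cast_val, add_sub_cancel] at this

include hm4 in
lemma exists_vstep (j : ZMod n) : ∃ i : ZMod m, HoneyAdj m n (i, j) (i, j + 1) := by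
  by_cases h : Even j.val
  · refine ⟨0, Or.inr ⟨rfl, Or.inl ⟨rfl, ?_⟩⟩⟩
    simpa [ZMod.val_zero] using h
  · refine ⟨1, Or.inr ⟨rfl, Or.inl ⟨rfl, ?_⟩⟩⟩
    have h1 : (1 : ZMod m).val = 1 := by
      rw [ZMod.val_one_eq_one_mod, Nat.mod_eq_of_lt (by omega)]
    rw [h1]
    simp only [Nat.even_iff] at h ⊢
    omega

include hm4 in
lemma hrel_updown (k : ℕ) : ∀ (x : Vtx m n) (i : ZMod m),
    Relation.ReflTransGen (HoneyAdj m n) x (i, x.2 + (k : ZMod n)) := by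
  induction k with
  | zero =>
    intro x i
    simpa using hrel_row' x i
  | succ k ih =>
    intro x i
    obtain ⟨i₀, hstep⟩ := exists_vstep hm4 (x.2 + (k : ZMod n))
    have h1 := ih x i₀
    have h2 : Relation.ReflTransGen (HoneyAdj m n) x (i₀, x.2 + (k : ZMod n) + 1) :=
      h1.tail hstep
    have h3 := hrel_row' (i₀, x.2 + (k : ZMod n) + 1) i
    have : x.2 + ((k + 1 : ℕ) : ZMod n) = x.2 + (k : ZMod n) + 1 := by push_cast; ring
    rw [this]
    exact h2.trans h3

include hm4 in
lemma honey_connected (x y : Vtx m n) :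
    Relation.ReflTransGen (HoneyAdj m n) x y := by
  have := hrel_updown hm4 (y.2 - x.2).val x y.1
  rwa [zmod_cast_val, add_sub_cancel] at this

-- ============ symmDiff helpers ============

section SD
variable {α : Type*} [DecidableEq α]

lemma sd_erase {A H : Finset α} {e : α} (heA : e ∈ A) (heH : e ∉ H) :
    symmDiff (A.erase e) H = (symmDiff A H).erase e := by
  ext a
  by_cases ha : a = e
  · subst ha
    simp [Finset.mem_symmDiff, heA, heH]
  · simp [Finset.mem_symmDiff, Finset.mem_erase, ha]

lemma sd_insert {A H : Finset α} {e : α} (heA : e ∉ A) (heH : e ∈ H) :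
    symmDiff (insert e A) H = (symmDiff A H).erase e := by
  ext a
  by_cases ha : a = e
  · subst ha
    simp [Finset.mem_symmDiff, heA, heH]
  · simp [Finset.mem_symmDiff, Finset.mem_erase, ha]

lemma sd_mem_left {A H : Finset α} {e : α} (heA : e ∈ A) (heH : e ∉ H) : e ∈ symmDiff A H := by
  simp [Finset.mem_symmDiff, heA, heH]

lemma sd_mem_right {A H : Finset α} {e : α} (heA : e ∉ A) (heH : e ∈ H) : e ∈ symmDiff A H := by
  simp [Finset.mem_symmDiff, heA, heH]

lemma sd_empty_iff {A H : Finset α} : symmDiff A H = ∅ ↔ A = H := by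
  rw [← Finset.bot_eq_empty, symmDiff_eq_bot]

end SD

-- ============ Pinf application ============

lemma Pinf_apply {A B : Finset (Sym2 (Vtx m n))} {u v a b : Vtx m n}
    (hs : IsWormState m n A u v) (ht : IsWormState m n B a b) :
    Pinf m n ⟨(A, u, v), hs⟩ ⟨(B, a, b), ht⟩ =
      if u = v then
        (if (⟨(B, a, b), ht⟩ : WormState m n) = ⟨(A, u, v), hs⟩ then
            (bdeg m n A v : ℝ) / 3 else 0) +
        (if ∃ v' : Vtx m n, HoneyAdj m n v v' ∧ s(v, v') ∉ A ∧
            B = insert s(v, v') A ∧ ((a = v' ∧ b = v) ∨ (a = v ∧ b = v'))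
          then 1/6 else 0)
      else
        (if bdeg m n A u = 3 ∧ ∃ u' : Vtx m n, HoneyAdj m n u u' ∧
            s(u, u') ∈ A ∧ B = A.erase s(u, u') ∧ a = u' ∧ b = v then 1/6 else 0) +
        (if bdeg m n A u = 1 ∧ ∃ u' : Vtx m n, HoneyAdj m n u u' ∧
            s(u, u') ∉ A ∧ B = insert s(u, u') A ∧ a = u' ∧ b = v then 1/4 else 0) +
        (if bdeg m n A v = 3 ∧ ∃ v' : Vtx m n, HoneyAdj m n v v' ∧
            s(v, v') ∈ A ∧ B = A.erase s(v, v') ∧ a = u ∧ b = v' then 1/6 else 0) +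
        (if bdeg m n A v = 1 ∧ ∃ v' : Vtx m n, HoneyAdj m n v v' ∧
            s(v, v') ∉ A ∧ B = insert s(v, v') A ∧ a = u ∧ b = v' then 1/4 else 0) := rfl

-- one-step reachability lemmas

lemma step_u_erase {A : Finset (Sym2 (Vtx m n))} {u v u' : Vtx m n}
    (hs : IsWormState m n A u v) (ht : IsWormState m n (A.erase s(u, u')) u' v)
    (huv : u ≠ v) (hd : bdeg m n A u = 3) (hadj : HoneyAdj m n u u')
    (hmem : s(u, u') ∈ A) :
    Reaches m n ⟨(A, u, v), hs⟩ ⟨(A.erase s(u, u'), u', v), ht⟩ := by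
  apply reaches_of_pos
  rw [Pinf_apply hs ht, if_neg huv]
  have hC : bdeg m n A u = 3 ∧ ∃ w : Vtx m n, HoneyAdj m n u w ∧
      s(u, w) ∈ A ∧ A.erase s(u, u') = A.erase s(u, w) ∧ u' = w ∧ v = v :=
    ⟨hd, u', hadj, hmem, rfl, rfl, rfl⟩
  rw [if_pos hC]
  split_ifs <;> norm_num

lemma step_u_insert {A : Finset (Sym2 (Vtx m n))} {u v u' : Vtx m n}
    (hs : IsWormState m n A u v) (ht : IsWormState m n (insert s(u, u') A) u' v)
    (huv : u ≠ v) (hd : bdeg m n A u = 1) (hadj : HoneyAdj m n u u')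
    (hmem : s(u, u') ∉ A) :
    Reaches m n ⟨(A, u, v), hs⟩ ⟨(insert s(u, u') A, u', v), ht⟩ := by
  apply reaches_of_pos
  rw [Pinf_apply hs ht, if_neg huv]
  have hC : bdeg m n A u = 1 ∧ ∃ w : Vtx m n, HoneyAdj m n u w ∧
      s(u, w) ∉ A ∧ insert s(u, u') A = insert s(u, w) A ∧ u' = w ∧ v = v :=
    ⟨hd, u', hadj, hmem, rfl, rfl, rfl⟩
  rw [if_pos hC]
  split_ifs <;> norm_num

lemma step_v_erase {A : Finset (Sym2 (Vtx m n))} {u v v' : Vtx m n}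
    (hs : IsWormState m n A u v) (ht : IsWormState m n (A.erase s(v, v')) u v')
    (huv : u ≠ v) (hd : bdeg m n A v = 3) (hadj : HoneyAdj m n v v')
    (hmem : s(v, v') ∈ A) :
    Reaches m n ⟨(A, u, v), hs⟩ ⟨(A.erase s(v, v'), u, v'), ht⟩ := by
  apply reaches_of_pos
  rw [Pinf_apply hs ht, if_neg huv]
  have hC : bdeg m n A v = 3 ∧ ∃ w : Vtx m n, HoneyAdj m n v w ∧
      s(v, w) ∈ A ∧ A.erase s(v, v') = A.erase s(v, w) ∧ u = u ∧ v' = w :=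
    ⟨hd, v', hadj, hmem, rfl, rfl, rfl⟩
  rw [if_pos hC]
  split_ifs <;> norm_num

lemma step_v_insert {A : Finset (Sym2 (Vtx m n))} {u v v' : Vtx m n}
    (hs : IsWormState m n A u v) (ht : IsWormState m n (insert s(v, v') A) u v')
    (huv : u ≠ v) (hd : bdeg m n A v = 1) (hadj : HoneyAdj m n v v')
    (hmem : s(v, v') ∉ A) :
    Reaches m n ⟨(A, u, v), hs⟩ ⟨(insert s(v, v') A, u, v'), ht⟩ := by
  apply reaches_of_pos
  rw [Pinf_apply hs ht, if_neg huv]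
  have hC : bdeg m n A v = 1 ∧ ∃ w : Vtx m n, HoneyAdj m n v w ∧
      s(v, w) ∉ A ∧ insert s(v, v') A = insert s(v, w) A ∧ u = u ∧ v' = w :=
    ⟨hd, v', hadj, hmem, rfl, rfl, rfl⟩
  rw [if_pos hC]
  split_ifs <;> norm_num

lemma step_diag {A : Finset (Sym2 (Vtx m n))} {v w a b : Vtx m n}
    (hs : IsWormState m n A v v) (ht : IsWormState m n (insert s(v, w) A) a b)
    (hadj : HoneyAdj m n v w) (hmem : s(v, w) ∉ A)
    (hor : (a = w ∧ b = v) ∨ (a = v ∧ b = w)) :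
    Reaches m n ⟨(A, v, v), hs⟩ ⟨(insert s(v, w) A, a, b), ht⟩ := by
  apply reaches_of_pos
  rw [Pinf_apply hs ht, if_pos rfl]
  have hC : ∃ v' : Vtx m n, HoneyAdj m n v v' ∧ s(v, v') ∉ A ∧
      insert s(v, w) A = insert s(v, v') A ∧
      ((a = v' ∧ b = v) ∨ (a = v ∧ b = v')) := ⟨w, hadj, hmem, rfl, hor⟩
  rw [if_pos hC]
  have h0 : (0:ℝ) ≤ if (⟨(insert s(v, w) A, a, b), ht⟩ : WormState m n) = ⟨(A, v, v), hs⟩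
      then (bdeg m n A v : ℝ) / 3 else 0 := by
    split_ifs <;> positivity
  linarith

-- ============ pointwise degree lemmas ============

lemma bdeg_erase_mem {A : Finset (Sym2 (Vtx m n))} {e : Sym2 (Vtx m n)} (he : e ∈ A)
    {x : Vtx m n} (hx : x ∈ e) : bdeg m n (A.erase e) x + 1 = bdeg m n A x := by
  have h := bdeg_erase m n A he x
  rwa [if_pos hx] at h

lemma bdeg_erase_not {A : Finset (Sym2 (Vtx m n))} {e : Sym2 (Vtx m n)} (he : e ∈ A)
    {x : Vtx m n} (hx : x ∉ e) : bdeg m n (A.erase e) x = bdeg m n A x := by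
  have h := bdeg_erase m n A he x
  rwa [if_neg hx, add_zero] at h

lemma bdeg_insert_mem {A : Finset (Sym2 (Vtx m n))} {e : Sym2 (Vtx m n)} (he : e ∉ A)
    {x : Vtx m n} (hx : x ∈ e) : bdeg m n (insert e A) x = bdeg m n A x + 1 := by
  have h := bdeg_insert m n A he x
  rwa [if_pos hx] at h

lemma bdeg_insert_not {A : Finset (Sym2 (Vtx m n))} {e : Sym2 (Vtx m n)} (he : e ∉ A)
    {x : Vtx m n} (hx : x ∉ e) : bdeg m n (insert e A) x = bdeg m n A x := by
  have h := bdeg_insert m n A he x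
  rwa [if_neg hx, add_zero] at h

lemma odd_toggle_erase {A : Finset (Sym2 (Vtx m n))} {e : Sym2 (Vtx m n)} (he : e ∈ A)
    (x : Vtx m n) :
    Odd (bdeg m n (A.erase e) x) ↔ (Odd (bdeg m n A x) ↔ x ∉ e) := by
  by_cases hx : x ∈ e
  · have h := bdeg_erase_mem he hx
    simp only [hx, not_true_eq_false, iff_false, Nat.odd_iff]
    omega
  · have h := bdeg_erase_not he hx
    simp only [hx, not_false_eq_true, iff_true, h]

lemma odd_toggle_insert {A : Finset (Sym2 (Vtx m n))} {e : Sym2 (Vtx m n)} (he : e ∉ A)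
    (x : Vtx m n) :
    Odd (bdeg m n (insert e A) x) ↔ (Odd (bdeg m n A x) ↔ x ∉ e) := by
  by_cases hx : x ∈ e
  · have h := bdeg_insert_mem he hx
    simp only [hx, not_true_eq_false, iff_false, Nat.odd_iff] at h ⊢
    omega
  · have h := bdeg_insert_not he hx
    simp only [hx, not_false_eq_true, iff_true, h]

-- degree of a non-defect vertex in a fully supported worm state
include hm hn hm4 hn4 in
lemma nondefect_deg {A : Finset (Sym2 (Vtx m n))} {u v : Vtx m n}
    (h : IsWormState m n A u v) (hfs : ∀ y, bdeg m n A y ≠ 0) {x : Vtx m n}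
    (hx : ¬((x = u ∨ x = v) ∧ u ≠ v)) : bdeg m n A x = 2 := by
  have hodd := (h.2 x).not.mpr hx
  have hle := bdeg_le_three hm hn hm4 hn4 h.1 x
  have hne := hfs x
  rw [Nat.odd_iff] at hodd
  omega

include hm hn hm4 hn4 in
lemma defect_deg {A : Finset (Sym2 (Vtx m n))} {u v : Vtx m n}
    (h : IsWormState m n A u v) (huv : u ≠ v) {x : Vtx m n} (hx : x = u ∨ x = v) :
    bdeg m n A x = 1 ∨ bdeg m n A x = 3 := by
  have hodd := (h.2 x).mpr ⟨hx, huv⟩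
  have hle := bdeg_le_three hm hn hm4 hn4 h.1 x
  rw [Nat.odd_iff] at hodd
  omega

-- ============ worm state transfers ============

include hm4 hn4 in
lemma worm_u_erase {A : Finset (Sym2 (Vtx m n))} {u v u' : Vtx m n}
    (h : IsWormState m n A u v) (huv : u ≠ v) (hadj : HoneyAdj m n u u')
    (hu'v : u' ≠ v) (he : s(u, u') ∈ A) :
    IsWormState m n (A.erase s(u, u')) u' v := by
  have huu' : u ≠ u' := honeyAdj_ne hm4 hn4 hadj
  refine ⟨(Finset.erase_subset _ _).trans h.1, fun x => ?_⟩
  rw [odd_toggle_erase he x, h.2 x, Sym2.mem_iff]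
  rcases eq_or_ne x u with rfl | hxu
  · simp [huv, huu', hu'v]
  · rcases eq_or_ne x u' with rfl | hxu'
    · simp [huu'.symm, hu'v, huv]
    · rcases eq_or_ne x v with rfl | hxv
      · simp [huv.symm, hu'v.symm, hxu, hxu', huv, hu'v]
      · simp [hxu, hxu', hxv, huv, hu'v]

include hm4 hn4 in
lemma worm_u_insert {A : Finset (Sym2 (Vtx m n))} {u v u' : Vtx m n}
    (h : IsWormState m n A u v) (huv : u ≠ v) (hadj : HoneyAdj m n u u')
    (hu'v : u' ≠ v) (he : s(u, u') ∉ A) :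
    IsWormState m n (insert s(u, u') A) u' v := by
  have huu' : u ≠ u' := honeyAdj_ne hm4 hn4 hadj
  refine ⟨Finset.insert_subset (honeyAdj_mem hadj) h.1, fun x => ?_⟩
  rw [odd_toggle_insert he x, h.2 x, Sym2.mem_iff]
  rcases eq_or_ne x u with rfl | hxu
  · simp [huv, huu', hu'v]
  · rcases eq_or_ne x u' with rfl | hxu'
    · simp [huu'.symm, hu'v, huv]
    · rcases eq_or_ne x v with rfl | hxv
      · simp [huv.symm, hu'v.symm, hxu, hxu', huv, hu'v]
      · simp [hxu, hxu', hxv, huv, hu'v]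

include hm4 hn4 in
lemma worm_merge_erase {A : Finset (Sym2 (Vtx m n))} {u v : Vtx m n}
    (h : IsWormState m n A u v) (huv : u ≠ v) (hadj : HoneyAdj m n u v)
    (he : s(u, v) ∈ A) :
    IsWormState m n (A.erase s(u, v)) v v := by
  refine ⟨(Finset.erase_subset _ _).trans h.1, fun x => ?_⟩
  rw [odd_toggle_erase he x, h.2 x, Sym2.mem_iff]
  rcases eq_or_ne x u with rfl | hxu
  · simp [huv]
  · rcases eq_or_ne x v with rfl | hxv
    · simp [huv.symm, huv]
    · simp [hxu, hxv, huv]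

include hm4 hn4 in
lemma worm_merge_insert {A : Finset (Sym2 (Vtx m n))} {u v : Vtx m n}
    (h : IsWormState m n A u v) (huv : u ≠ v) (hadj : HoneyAdj m n u v)
    (he : s(u, v) ∉ A) :
    IsWormState m n (insert s(u, v) A) v v := by
  refine ⟨Finset.insert_subset (honeyAdj_mem hadj) h.1, fun x => ?_⟩
  rw [odd_toggle_insert he x, h.2 x, Sym2.mem_iff]
  rcases eq_or_ne x u with rfl | hxu
  · simp [huv]
  · rcases eq_or_ne x v with rfl | hxv
    · simp [huv.symm, huv]
    · simp [hxu, hxv, huv]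

include hm4 hn4 in
lemma worm_diag_insert {A : Finset (Sym2 (Vtx m n))} {v w : Vtx m n}
    (h : IsWormState m n A v v) (hadj : HoneyAdj m n v w) (he : s(v, w) ∉ A) :
    IsWormState m n (insert s(v, w) A) w v := by
  have hvw : v ≠ w := honeyAdj_ne hm4 hn4 hadj
  refine ⟨Finset.insert_subset (honeyAdj_mem hadj) h.1, fun x => ?_⟩
  rw [odd_toggle_insert he x, h.2 x, Sym2.mem_iff]
  rcases eq_or_ne x v with rfl | hxv
  · simp [hvw, hvw.symm]
  · rcases eq_or_ne x w with rfl | hxw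
    · simp [hvw.symm, hvw]
    · simp [hxv, hxw, hvw]

include hm4 hn4 in
lemma worm_diag_insert' {A : Finset (Sym2 (Vtx m n))} {v w : Vtx m n}
    (h : IsWormState m n A v v) (hadj : HoneyAdj m n v w) (he : s(v, w) ∉ A) :
    IsWormState m n (insert s(v, w) A) v w := by
  have hvw : v ≠ w := honeyAdj_ne hm4 hn4 hadj
  refine ⟨Finset.insert_subset (honeyAdj_mem hadj) h.1, fun x => ?_⟩
  rw [odd_toggle_insert he x, h.2 x, Sym2.mem_iff]
  rcases eq_or_ne x v with rfl | hxv
  · simp [hvw, hvw.symm]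
  · rcases eq_or_ne x w with rfl | hxw
    · simp [hvw.symm, hvw]
    · simp [hxv, hxw, hvw]

-- ============ v-side worm transfers ============

include hm4 hn4 in
lemma worm_v_erase {A : Finset (Sym2 (Vtx m n))} {u v v' : Vtx m n}
    (h : IsWormState m n A u v) (huv : u ≠ v) (hadj : HoneyAdj m n v v')
    (hv'u : v' ≠ u) (he : s(v, v') ∈ A) :
    IsWormState m n (A.erase s(v, v')) u v' := by
  have hvv' : v ≠ v' := honeyAdj_ne hm4 hn4 hadj
  refine ⟨(Finset.erase_subset _ _).trans h.1, fun x => ?_⟩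
  rw [odd_toggle_erase he x, h.2 x, Sym2.mem_iff]
  rcases eq_or_ne x v with rfl | hxv
  · simp [huv, huv.symm, hvv', hvv'.symm, hv'u, hv'u.symm]
  · rcases eq_or_ne x v' with rfl | hxv'
    · simp [huv, huv.symm, hvv', hvv'.symm, hv'u, hv'u.symm]
    · rcases eq_or_ne x u with rfl | hxu
      · simp [huv, huv.symm, hv'u, hv'u.symm, hxv, hxv']
      · simp [hxu, hxv, hxv', huv, hv'u]

include hm4 hn4 in
lemma worm_v_insert {A : Finset (Sym2 (Vtx m n))} {u v v' : Vtx m n}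
    (h : IsWormState m n A u v) (huv : u ≠ v) (hadj : HoneyAdj m n v v')
    (hv'u : v' ≠ u) (he : s(v, v') ∉ A) :
    IsWormState m n (insert s(v, v') A) u v' := by
  have hvv' : v ≠ v' := honeyAdj_ne hm4 hn4 hadj
  refine ⟨Finset.insert_subset (honeyAdj_mem hadj) h.1, fun x => ?_⟩
  rw [odd_toggle_insert he x, h.2 x, Sym2.mem_iff]
  rcases eq_or_ne x v with rfl | hxv
  · simp [huv, huv.symm, hvv', hvv'.symm, hv'u, hv'u.symm]
  · rcases eq_or_ne x v' with rfl | hxv'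
    · simp [huv, huv.symm, hvv', hvv'.symm, hv'u, hv'u.symm]
    · rcases eq_or_ne x u with rfl | hxu
      · simp [huv, huv.symm, hv'u, hv'u.symm, hxv, hxv']
      · simp [hxu, hxv, hxv', huv, hv'u]

lemma state_eq {A B : Finset (Sym2 (Vtx m n))} {u v : Vtx m n}
    (h1 : IsWormState m n A u v) (h2 : IsWormState m n B u v) (hAB : A = B) :
    (⟨(A, u, v), h1⟩ : WormState m n) = ⟨(B, u, v), h2⟩ :=
  Subtype.ext (by subst hAB; rfl)

-- ============ reversible moves ============

include hm hn hm4 hn4 in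
lemma comm_u_erase {A : Finset (Sym2 (Vtx m n))} {u v u' : Vtx m n}
    (h : IsWormState m n A u v) (hfs : ∀ y, bdeg m n A y ≠ 0)
    (huv : u ≠ v) (hadj : HoneyAdj m n u u') (hu'v : u' ≠ v)
    (hd : bdeg m n A u = 3) (he : s(u, u') ∈ A) :
    ∃ ht : IsWormState m n (A.erase s(u, u')) u' v,
      Comm m n ⟨(A, u, v), h⟩ ⟨(A.erase s(u, u'), u', v), ht⟩ ∧
      (∀ y, bdeg m n (A.erase s(u, u')) y ≠ 0) := by
  have huu' : u ≠ u' := honeyAdj_ne hm4 hn4 hadj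
  have ht := worm_u_erase hm4 hn4 h huv hadj hu'v he
  have hu'2 : bdeg m n A u' = 2 := by
    refine nondefect_deg hm hn hm4 hn4 h hfs ?_
    rintro ⟨rfl | rfl, -⟩
    · exact huu' rfl
    · exact hu'v rfl
  have hdu : bdeg m n (A.erase s(u, u')) u + 1 = 3 := by
    rw [bdeg_erase_mem he (by simp), hd]
  have hdu' : bdeg m n (A.erase s(u, u')) u' + 1 = 2 := by
    rw [bdeg_erase_mem he (by simp), hu'2]
  have hfs' : ∀ y, bdeg m n (A.erase s(u, u')) y ≠ 0 := by
    intro y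
    by_cases hy : y ∈ s(u, u')
    · rw [Sym2.mem_iff] at hy
      rcases hy with rfl | rfl <;> omega
    · rw [bdeg_erase_not he hy]; exact hfs y
  refine ⟨ht, ⟨step_u_erase h ht huv hd hadj he, ?_⟩, hfs'⟩
  have hswap : s(u', u) = s(u, u') := Sym2.eq_swap
  have hne : s(u', u) ∉ A.erase s(u, u') := by
    rw [hswap]; exact Finset.notMem_erase _ _
  have hIns : insert s(u', u) (A.erase s(u, u')) = A := by
    rw [hswap]; exact Finset.insert_erase he
  have ht2 : IsWormState m n (insert s(u', u) (A.erase s(u, u'))) u v := hIns.symm ▸ h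
  have hback := step_u_insert ht ht2 hu'v (by omega) (honeyAdj_symm hadj) hne
  rwa [state_eq ht2 h hIns] at hback

include hm hn hm4 hn4 in
lemma comm_u_insert {A : Finset (Sym2 (Vtx m n))} {u v u' : Vtx m n}
    (h : IsWormState m n A u v) (hfs : ∀ y, bdeg m n A y ≠ 0)
    (huv : u ≠ v) (hadj : HoneyAdj m n u u') (hu'v : u' ≠ v)
    (hd : bdeg m n A u = 1) (he : s(u, u') ∉ A) :
    ∃ ht : IsWormState m n (insert s(u, u') A) u' v,
      Comm m n ⟨(A, u, v), h⟩ ⟨(insert s(u, u') A, u', v), ht⟩ ∧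
      (∀ y, bdeg m n (insert s(u, u') A) y ≠ 0) := by
  have huu' : u ≠ u' := honeyAdj_ne hm4 hn4 hadj
  have ht := worm_u_insert hm4 hn4 h huv hadj hu'v he
  have hu'2 : bdeg m n A u' = 2 := by
    refine nondefect_deg hm hn hm4 hn4 h hfs ?_
    rintro ⟨rfl | rfl, -⟩
    · exact huu' rfl
    · exact hu'v rfl
  have hdu' : bdeg m n (insert s(u, u') A) u' = 3 := by
    rw [bdeg_insert_mem he (by simp), hu'2]
  have hfs' : ∀ y, bdeg m n (insert s(u, u') A) y ≠ 0 := by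
    intro y
    by_cases hy : y ∈ s(u, u')
    · rw [bdeg_insert_mem he hy]; omega
    · rw [bdeg_insert_not he hy]; exact hfs y
  refine ⟨ht, ⟨step_u_insert h ht huv hd hadj he, ?_⟩, hfs'⟩
  have hswap : s(u', u) = s(u, u') := Sym2.eq_swap
  have hmem : s(u', u) ∈ insert s(u, u') A := by
    rw [hswap]; exact Finset.mem_insert_self _ _
  have hErs : (insert s(u, u') A).erase s(u', u) = A := by
    rw [hswap]; exact Finset.erase_insert he
  have ht2 : IsWormState m n ((insert s(u, u') A).erase s(u', u)) u v := hErs.symm ▸ h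
  have hback := step_u_erase ht ht2 hu'v hdu' (honeyAdj_symm hadj) hmem
  rwa [state_eq ht2 h hErs] at hback

include hm hn hm4 hn4 in
lemma comm_v_erase {A : Finset (Sym2 (Vtx m n))} {u v v' : Vtx m n}
    (h : IsWormState m n A u v) (hfs : ∀ y, bdeg m n A y ≠ 0)
    (huv : u ≠ v) (hadj : HoneyAdj m n v v') (hv'u : v' ≠ u)
    (hd : bdeg m n A v = 3) (he : s(v, v') ∈ A) :
    ∃ ht : IsWormState m n (A.erase s(v, v')) u v',
      Comm m n ⟨(A, u, v), h⟩ ⟨(A.erase s(v, v'), u, v'), ht⟩ ∧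
      (∀ y, bdeg m n (A.erase s(v, v')) y ≠ 0) := by
  have hvv' : v ≠ v' := honeyAdj_ne hm4 hn4 hadj
  have ht := worm_v_erase hm4 hn4 h huv hadj hv'u he
  have hv'2 : bdeg m n A v' = 2 := by
    refine nondefect_deg hm hn hm4 hn4 h hfs ?_
    rintro ⟨rfl | rfl, -⟩
    · exact hv'u rfl
    · exact hvv' rfl
  have hdv : bdeg m n (A.erase s(v, v')) v + 1 = 3 := by
    rw [bdeg_erase_mem he (by simp), hd]
  have hdv' : bdeg m n (A.erase s(v, v')) v' + 1 = 2 := by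
    rw [bdeg_erase_mem he (by simp), hv'2]
  have hfs' : ∀ y, bdeg m n (A.erase s(v, v')) y ≠ 0 := by
    intro y
    by_cases hy : y ∈ s(v, v')
    · rw [Sym2.mem_iff] at hy
      rcases hy with rfl | rfl <;> omega
    · rw [bdeg_erase_not he hy]; exact hfs y
  refine ⟨ht, ⟨step_v_erase h ht huv hd hadj he, ?_⟩, hfs'⟩
  have hswap : s(v', v) = s(v, v') := Sym2.eq_swap
  have hne : s(v', v) ∉ A.erase s(v, v') := by
    rw [hswap]; exact Finset.notMem_erase _ _
  have hIns : insert s(v', v) (A.erase s(v, v')) = A := by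
    rw [hswap]; exact Finset.insert_erase he
  have ht2 : IsWormState m n (insert s(v', v) (A.erase s(v, v'))) u v := hIns.symm ▸ h
  have hback := step_v_insert ht ht2 (fun hc => hv'u hc.symm) (by omega)
    (honeyAdj_symm hadj) hne
  rwa [state_eq ht2 h hIns] at hback

include hm hn hm4 hn4 in
lemma comm_v_insert {A : Finset (Sym2 (Vtx m n))} {u v v' : Vtx m n}
    (h : IsWormState m n A u v) (hfs : ∀ y, bdeg m n A y ≠ 0)
    (huv : u ≠ v) (hadj : HoneyAdj m n v v') (hv'u : v' ≠ u)
    (hd : bdeg m n A v = 1) (he : s(v, v') ∉ A) :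
    ∃ ht : IsWormState m n (insert s(v, v') A) u v',
      Comm m n ⟨(A, u, v), h⟩ ⟨(insert s(v, v') A, u, v'), ht⟩ ∧
      (∀ y, bdeg m n (insert s(v, v') A) y ≠ 0) := by
  have hvv' : v ≠ v' := honeyAdj_ne hm4 hn4 hadj
  have ht := worm_v_insert hm4 hn4 h huv hadj hv'u he
  have hv'2 : bdeg m n A v' = 2 := by
    refine nondefect_deg hm hn hm4 hn4 h hfs ?_
    rintro ⟨rfl | rfl, -⟩
    · exact hv'u rfl
    · exact hvv' rfl
  have hdv' : bdeg m n (insert s(v, v') A) v' = 3 := by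
    rw [bdeg_insert_mem he (by simp), hv'2]
  have hfs' : ∀ y, bdeg m n (insert s(v, v') A) y ≠ 0 := by
    intro y
    by_cases hy : y ∈ s(v, v')
    · rw [bdeg_insert_mem he hy]; omega
    · rw [bdeg_insert_not he hy]; exact hfs y
  refine ⟨ht, ⟨step_v_insert h ht huv hd hadj he, ?_⟩, hfs'⟩
  have hswap : s(v', v) = s(v, v') := Sym2.eq_swap
  have hmem : s(v', v) ∈ insert s(v, v') A := by
    rw [hswap]; exact Finset.mem_insert_self _ _
  have hErs : (insert s(v, v') A).erase s(v', v) = A := by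
    rw [hswap]; exact Finset.erase_insert he
  have ht2 : IsWormState m n ((insert s(v, v') A).erase s(v', v)) u v := hErs.symm ▸ h
  have hback := step_v_erase ht ht2 (fun hc => hv'u hc.symm) hdv'
    (honeyAdj_symm hadj) hmem
  rwa [state_eq ht2 h hErs] at hback

include hm hn hm4 hn4 in
lemma comm_merge_erase {A : Finset (Sym2 (Vtx m n))} {u v : Vtx m n}
    (h : IsWormState m n A u v) (hfs : ∀ y, bdeg m n A y ≠ 0)
    (huv : u ≠ v) (hadj : HoneyAdj m n u v)
    (hd : bdeg m n A u = 3) (hdv : bdeg m n A v = 3) (he : s(u, v) ∈ A) :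
    ∃ ht : IsWormState m n (A.erase s(u, v)) v v,
      Comm m n ⟨(A, u, v), h⟩ ⟨(A.erase s(u, v), v, v), ht⟩ ∧
      (∀ y, bdeg m n (A.erase s(u, v)) y ≠ 0) := by
  have ht := worm_merge_erase hm4 hn4 h huv hadj he
  have hdu' : bdeg m n (A.erase s(u, v)) u + 1 = 3 := by
    rw [bdeg_erase_mem he (by simp), hd]
  have hdv' : bdeg m n (A.erase s(u, v)) v + 1 = 3 := by
    rw [bdeg_erase_mem he (by simp), hdv]
  have hfs' : ∀ y, bdeg m n (A.erase s(u, v)) y ≠ 0 := by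
    intro y
    by_cases hy : y ∈ s(u, v)
    · rw [Sym2.mem_iff] at hy
      rcases hy with rfl | rfl <;> omega
    · rw [bdeg_erase_not he hy]; exact hfs y
  refine ⟨ht, ⟨step_u_erase h ht huv hd hadj he, ?_⟩, hfs'⟩
  have hswap : s(v, u) = s(u, v) := Sym2.eq_swap
  have hne : s(v, u) ∉ A.erase s(u, v) := by
    rw [hswap]; exact Finset.notMem_erase _ _
  have hIns : insert s(v, u) (A.erase s(u, v)) = A := by
    rw [hswap]; exact Finset.insert_erase he
  have ht2 : IsWormState m n (insert s(v, u) (A.erase s(u, v))) u v := hIns.symm ▸ h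
  have hback := step_diag ht ht2 (honeyAdj_symm hadj) hne (Or.inl ⟨rfl, rfl⟩)
  rwa [state_eq ht2 h hIns] at hback

include hm hn hm4 hn4 in
lemma comm_diag_insert {A : Finset (Sym2 (Vtx m n))} {v w : Vtx m n}
    (h : IsWormState m n A v v) (hfs : ∀ y, bdeg m n A y ≠ 0)
    (hadj : HoneyAdj m n v w) (he : s(v, w) ∉ A) :
    ∃ ht : IsWormState m n (insert s(v, w) A) w v,
      Comm m n ⟨(A, v, v), h⟩ ⟨(insert s(v, w) A, w, v), ht⟩ ∧
      (∀ y, bdeg m n (insert s(v, w) A) y ≠ 0) := by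
  have hvw : v ≠ w := honeyAdj_ne hm4 hn4 hadj
  have ht := worm_diag_insert hm4 hn4 h hadj he
  have hw2 : bdeg m n A w = 2 := nondefect_deg hm hn hm4 hn4 h hfs (by simp)
  have hdw : bdeg m n (insert s(v, w) A) w = 3 := by
    rw [bdeg_insert_mem he (by simp), hw2]
  have hfs' : ∀ y, bdeg m n (insert s(v, w) A) y ≠ 0 := by
    intro y
    by_cases hy : y ∈ s(v, w)
    · rw [bdeg_insert_mem he hy]; omega
    · rw [bdeg_insert_not he hy]; exact hfs y
  refine ⟨ht, ⟨step_diag h ht hadj he (Or.inl ⟨rfl, rfl⟩), ?_⟩, hfs'⟩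
  have hswap : s(w, v) = s(v, w) := Sym2.eq_swap
  have hmem : s(w, v) ∈ insert s(v, w) A := by
    rw [hswap]; exact Finset.mem_insert_self _ _
  have hErs : (insert s(v, w) A).erase s(w, v) = A := by
    rw [hswap]; exact Finset.erase_insert he
  have ht2 : IsWormState m n ((insert s(v, w) A).erase s(w, v)) v v := hErs.symm ▸ h
  have hback := step_u_erase ht ht2 hvw.symm hdw (honeyAdj_symm hadj) hmem
  rwa [state_eq ht2 h hErs] at hback

include hm hn hm4 hn4 in
lemma comm_diag_insert' {A : Finset (Sym2 (Vtx m n))} {v w : Vtx m n}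
    (h : IsWormState m n A v v) (hfs : ∀ y, bdeg m n A y ≠ 0)
    (hadj : HoneyAdj m n v w) (he : s(v, w) ∉ A) :
    ∃ ht : IsWormState m n (insert s(v, w) A) v w,
      Comm m n ⟨(A, v, v), h⟩ ⟨(insert s(v, w) A, v, w), ht⟩ ∧
      (∀ y, bdeg m n (insert s(v, w) A) y ≠ 0) := by
  have hvw : v ≠ w := honeyAdj_ne hm4 hn4 hadj
  have ht := worm_diag_insert' hm4 hn4 h hadj he
  have hw2 : bdeg m n A w = 2 := nondefect_deg hm hn hm4 hn4 h hfs (by simp)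
  have hdw : bdeg m n (insert s(v, w) A) w = 3 := by
    rw [bdeg_insert_mem he (by simp), hw2]
  have hfs' : ∀ y, bdeg m n (insert s(v, w) A) y ≠ 0 := by
    intro y
    by_cases hy : y ∈ s(v, w)
    · rw [bdeg_insert_mem he hy]; omega
    · rw [bdeg_insert_not he hy]; exact hfs y
  refine ⟨ht, ⟨step_diag h ht hadj he (Or.inr ⟨rfl, rfl⟩), ?_⟩, hfs'⟩
  have hswap : s(w, v) = s(v, w) := Sym2.eq_swap
  have hmem : s(w, v) ∈ insert s(v, w) A := by
    rw [hswap]; exact Finset.mem_insert_self _ _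
  have hErs : (insert s(v, w) A).erase s(w, v) = A := by
    rw [hswap]; exact Finset.erase_insert he
  have ht2 : IsWormState m n ((insert s(v, w) A).erase s(w, v)) v v := hErs.symm ▸ h
  have hback := step_v_erase ht ht2 hvw hdw (honeyAdj_symm hadj) hmem
  rwa [state_eq ht2 h hErs] at hback

include hm hn hm4 hn4 in
lemma comm_merge_insert {A : Finset (Sym2 (Vtx m n))} {u v : Vtx m n}
    (h : IsWormState m n A u v) (hfs : ∀ y, bdeg m n A y ≠ 0)
    (huv : u ≠ v) (hadj : HoneyAdj m n u v)
    (hd : bdeg m n A u = 1) (hdv : bdeg m n A v = 1) (he : s(u, v) ∉ A) :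
    ∃ ht : IsWormState m n (insert s(u, v) A) v v,
      Comm m n ⟨(A, u, v), h⟩ ⟨(insert s(u, v) A, v, v), ht⟩ ∧
      (∀ y, bdeg m n (insert s(u, v) A) y ≠ 0) := by
  set B := insert s(u, v) A with hB
  have ht := worm_merge_insert hm4 hn4 h huv hadj he
  have hBv : bdeg m n B v = 2 := by
    rw [hB, bdeg_insert_mem he (by simp), hdv]
  have hfs' : ∀ y, bdeg m n B y ≠ 0 := by
    intro y
    by_cases hy : y ∈ s(u, v)
    · rw [hB, bdeg_insert_mem he hy]; omega
    · rw [hB, bdeg_insert_not he hy]; exact hfs y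
  obtain ⟨w, hadjvw, hfB⟩ := exists_absent hm hn hm4 hn4 (A := B) (x := v) (by omega)
  have hvw : v ≠ w := honeyAdj_ne hm4 hn4 hadjvw
  have hwu : w ≠ u := by
    rintro rfl
    apply hfB
    rw [show s(v, w) = s(w, v) from Sym2.eq_swap]
    exact Finset.mem_insert_self _ _
  have huw : u ≠ w := hwu.symm
  refine ⟨ht, ⟨step_u_insert h ht huv hd hadj he, ?_⟩, hfs'⟩
  -- backward: three steps
  have ht1 := worm_diag_insert' hm4 hn4 ht hadjvw hfB
  have s1 := step_diag ht ht1 hadjvw hfB (Or.inr ⟨rfl, rfl⟩)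
  -- step 2 : remove s(v,u) with moving defect v → u
  have hsw : s(v, u) = s(u, v) := Sym2.eq_swap
  have he2 : s(v, u) ∈ insert s(v, w) B := by
    rw [hsw]; exact Finset.mem_insert_of_mem (Finset.mem_insert_self _ _)
  have hd2 : bdeg m n (insert s(v, w) B) v = 3 := by
    rw [bdeg_insert_mem hfB (by simp), hBv]
  have ht2 := worm_u_erase hm4 hn4 ht1 hvw (honeyAdj_symm hadj) huw he2
  have s2 := step_u_erase ht1 ht2 hvw hd2 (honeyAdj_symm hadj) he2
  have hef : s(u, v) ≠ s(v, w) := by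
    intro hc
    rw [Sym2.eq_iff] at hc
    rcases hc with ⟨h1, -⟩ | ⟨h1, -⟩
    · exact huv h1
    · exact huw h1
  have hEq2 : (insert s(v, w) B).erase s(v, u) = insert s(v, w) A := by
    rw [hsw, hB, Finset.insert_comm, Finset.erase_insert]
    simp only [Finset.mem_insert]
    rintro (hc | hc)
    · exact hef hc
    · exact he hc
  have ht3 : IsWormState m n (insert s(v, w) A) u w := hEq2 ▸ ht2
  rw [state_eq ht2 ht3 hEq2] at s2
  -- step 3 : remove s(w,v) with moving defect w → v
  have hfA : s(v, w) ∉ A := fun hc => hfB (Finset.mem_insert_of_mem hc)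
  have hsw2 : s(w, v) = s(v, w) := Sym2.eq_swap
  have hd3 : bdeg m n (insert s(v, w) A) w = 3 := by
    have hw2 : bdeg m n A w = 2 := by
      refine nondefect_deg hm hn hm4 hn4 h hfs ?_
      rintro ⟨rfl | rfl, -⟩
      · exact hwu rfl
      · exact hvw rfl
    rw [bdeg_insert_mem hfA (by simp), hw2]
  have he3 : s(w, v) ∈ insert s(v, w) A := by
    rw [hsw2]; exact Finset.mem_insert_self _ _
  have ht4 := worm_v_erase hm4 hn4 ht3 huw (honeyAdj_symm hadjvw) huv.symm he3
  have s3 := step_v_erase ht3 ht4 huw hd3 (honeyAdj_symm hadjvw) he3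
  have hEq3 : (insert s(v, w) A).erase s(w, v) = A := by
    rw [hsw2]; exact Finset.erase_insert hfA
  rw [state_eq ht4 h hEq3] at s3
  exact reaches_trans m n s1 (reaches_trans m n s2 s3)

-- ============ relocation ============

lemma worm_diag_rebase {A : Finset (Sym2 (Vtx m n))} {x : Vtx m n}
    (h : IsWormState m n A x x) (y : Vtx m n) : IsWormState m n A y y :=
  ⟨h.1, fun z => by rw [h.2 z]; simp⟩

include hm hn hm4 hn4 in
lemma comm_reloc_edge {A : Finset (Sym2 (Vtx m n))} {x y : Vtx m n}
    (h : IsWormState m n A x x) (hfs : ∀ z, bdeg m n A z ≠ 0)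
    (hadj : HoneyAdj m n x y) :
    Comm m n ⟨(A, x, x), h⟩ ⟨(A, y, y), worm_diag_rebase h y⟩ := by
  have hxy : x ≠ y := honeyAdj_ne hm4 hn4 hadj
  have hx2 : bdeg m n A x = 2 := nondefect_deg hm hn hm4 hn4 h hfs (by simp)
  have hy2 : bdeg m n A y = 2 := nondefect_deg hm hn hm4 hn4 h hfs (by simp)
  by_cases hg : s(x, y) ∈ A
  · -- 4-step route
    obtain ⟨w, hadjxw, hfabs⟩ := exists_absent hm hn hm4 hn4 (A := A) (x := x) (by omega)
    have hxw : x ≠ w := honeyAdj_ne hm4 hn4 hadjxw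
    have hwy : w ≠ y := by rintro rfl; exact hfabs hg
    have hw2 : bdeg m n A w = 2 := nondefect_deg hm hn hm4 hn4 h hfs (by simp)
    obtain ⟨ht1, c1, fs1⟩ := comm_diag_insert hm hn hm4 hn4 h hfs hadjxw hfabs
    -- state (insert f A, w, x); remove g = s(x,y) with second defect
    have hd2 : bdeg m n (insert s(x, w) A) x = 3 := by
      rw [bdeg_insert_mem hfabs (by simp), hx2]
    have hg2 : s(x, y) ∈ insert s(x, w) A := Finset.mem_insert_of_mem hg
    obtain ⟨ht2, c2, fs2⟩ := comm_v_erase hm hn hm4 hn4 ht1 fs1 hxw.symm hadj hwy.symm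
      hd2 hg2
    -- state ((insert f A).erase g, w, y); remove f = s(w,x) with first defect
    have hfg : s(x, w) ≠ s(x, y) := by
      intro hc
      rw [Sym2.congr_right] at hc
      subst hc
      exact hfabs hg
    have hwnot : w ∉ s(x, y) := by
      rw [Sym2.mem_iff]
      rintro (rfl | rfl)
      · exact hxw rfl
      · exact hwy rfl
    have hd3 : bdeg m n ((insert s(x, w) A).erase s(x, y)) w = 3 := by
      rw [bdeg_erase_not hg2 hwnot, bdeg_insert_mem hfabs (by simp), hw2]
    have hswf : s(w, x) = s(x, w) := Sym2.eq_swap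
    have hf3 : s(w, x) ∈ (insert s(x, w) A).erase s(x, y) := by
      rw [hswf]
      exact Finset.mem_erase.mpr ⟨hfg, Finset.mem_insert_self _ _⟩
    obtain ⟨ht3, c3, fs3⟩ := comm_u_erase hm hn hm4 hn4 ht2 fs2 hwy
      (honeyAdj_symm hadjxw) hxy hd3 hf3
    -- state equality to (A.erase g, x, y)
    have hEq : ((insert s(x, w) A).erase s(x, y)).erase s(w, x) = A.erase s(x, y) := by
      rw [hswf, Finset.erase_right_comm, Finset.erase_insert hfabs]
    have ht3' : IsWormState m n (A.erase s(x, y)) x y := hEq ▸ ht3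
    rw [state_eq ht3 ht3' hEq] at c3
    have fs3' : ∀ z, bdeg m n (A.erase s(x, y)) z ≠ 0 := by
      intro z; have := fs3 z; rwa [hEq] at this
    -- merge by re-inserting g
    have hd4 : bdeg m n (A.erase s(x, y)) x + 1 = 2 := by
      rw [bdeg_erase_mem hg (by simp), hx2]
    have hd4' : bdeg m n (A.erase s(x, y)) y + 1 = 2 := by
      rw [bdeg_erase_mem hg (by simp), hy2]
    obtain ⟨ht4, c4, fs4⟩ := comm_merge_insert hm hn hm4 hn4 ht3' fs3' hxy hadj
      (by omega) (by omega) (Finset.notMem_erase _ _)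
    have hEq4 : insert s(x, y) (A.erase s(x, y)) = A := Finset.insert_erase hg
    have ht4' : IsWormState m n A y y := worm_diag_rebase h y
    rw [state_eq ht4 ht4' hEq4] at c4
    exact comm_trans m n (comm_trans m n c1 c2) (comm_trans m n c3 c4)
  · -- 2-step route
    obtain ⟨ht1, c1, fs1⟩ := comm_diag_insert' hm hn hm4 hn4 h hfs hadj hg
    -- state (insert f A, x, y): merge by erasing f moving x into y
    have hd2 : bdeg m n (insert s(x, y) A) x = 3 := by
      rw [bdeg_insert_mem hg (by simp), hx2]
    have hd2' : bdeg m n (insert s(x, y) A) y = 3 := by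
      rw [bdeg_insert_mem hg (by simp), hy2]
    obtain ⟨ht2, c2, fs2⟩ := comm_merge_erase hm hn hm4 hn4 ht1 fs1 hxy hadj hd2 hd2'
      (Finset.mem_insert_self _ _)
    have hEq : (insert s(x, y) A).erase s(x, y) = A := Finset.erase_insert hg
    have ht2' : IsWormState m n A y y := worm_diag_rebase h y
    rw [state_eq ht2 ht2' hEq] at c2
    exact comm_trans m n c1 c2

include hm hn hm4 hn4 in
lemma comm_reloc {A : Finset (Sym2 (Vtx m n))} {x : Vtx m n}
    (h : IsWormState m n A x x) (hfs : ∀ z, bdeg m n A z ≠ 0) (y : Vtx m n) :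
    Comm m n ⟨(A, x, x), h⟩ ⟨(A, y, y), worm_diag_rebase h y⟩ := by
  have hconn := honey_connected hm4 x y
  induction hconn with
  | refl => exact comm_refl m n _
  | tail hxz hzy ih =>
    exact comm_trans m n ih (comm_reloc_edge hm hn hm4 hn4 (worm_diag_rebase h _) hfs hzy)

-- ============ the merge walk ============

include hm hn hm4 hn4 in
lemma merge_walk : ∀ N : ℕ, ∀ {A : Finset (Sym2 (Vtx m n))} {u v : Vtx m n}
    (h : IsWormState m n A u v), (∀ y, bdeg m n A y ≠ 0) → u ≠ v →
    bdeg m n A v = 3 → (symmDiff A (Hconfig m n)).card ≤ N →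
    ∃ (B : Finset (Sym2 (Vtx m n))) (b : Vtx m n) (ht : IsWormState m n B b b),
      (∀ y, bdeg m n B y ≠ 0) ∧ (symmDiff B (Hconfig m n)).card ≤ N ∧
      Comm m n ⟨(A, u, v), h⟩ ⟨(B, b, b), ht⟩ := by
  intro N
  induction N with
  | zero =>
    intro A u v h hfs huv hdv hN
    exfalso
    have hAH : A = Hconfig m n := sd_empty_iff.mp (Finset.card_eq_zero.mp (by omega))
    have hodd := (h.2 u).mpr ⟨Or.inl rfl, huv⟩
    rw [hAH, bdeg_Hconfig hm hm4 u] at hodd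
    simp [Nat.odd_iff] at hodd
  | succ N IH =>
    intro A u v h hfs huv hdv hN
    rcases defect_deg hm hn hm4 hn4 h huv (Or.inl rfl) with hdu | hdu
    · -- degree 1 : add an absent horizontal edge
      obtain ⟨w, hadj, hH, habs⟩ := exists_absent_horizontal hm hm4 (A := A) (x := u)
        (by omega)
      have hwv : w ≠ v := by
        rintro rfl
        have hmem : s(w, u) ∈ A :=
          full_adj_mem hm hn hm4 hn4 h.1 hdv (honeyAdj_symm hadj)
        rw [show s(w, u) = s(u, w) from Sym2.eq_swap] at hmem
        exact habs hmem
      obtain ⟨ht, hc, hfs'⟩ := comm_u_insert hm hn hm4 hn4 h hfs huv hadj hwv hdu habs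
      have hD : s(u, w) ∈ symmDiff A (Hconfig m n) := sd_mem_right habs hH
      have hcard : (symmDiff (insert s(u, w) A) (Hconfig m n)).card ≤ N := by
        rw [sd_insert habs hH, Finset.card_erase_of_mem hD]
        have : 1 ≤ (symmDiff A (Hconfig m n)).card := Finset.card_pos.mpr ⟨_, hD⟩
        omega
      have hdv' : bdeg m n (insert s(u, w) A) v = 3 := by
        have hvnot : v ∉ s(u, w) := by
          rw [Sym2.mem_iff]
          rintro (rfl | rfl)
          · exact huv rfl
          · exact hwv rfl
        rw [bdeg_insert_not habs hvnot, hdv]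
      obtain ⟨B, b, htB, hfsB, hcardB, hcB⟩ := IH ht hfs' hwv hdv' hcard
      exact ⟨B, b, htB, hfsB, by omega, comm_trans m n hc hcB⟩
    · -- degree 3 : erase the vertical edge
      have hadj : HoneyAdj m n u (vneigh m n u) :=
        (honeyAdj_iff hn hn4 u _).mpr (Or.inr (Or.inr rfl))
      have hve : s(u, vneigh m n u) ∈ A := full_adj_mem hm hn hm4 hn4 h.1 hdu hadj
      have hveH : s(u, vneigh m n u) ∉ Hconfig m n := vertical_not_Hconfig hn4 u
      have hD : s(u, vneigh m n u) ∈ symmDiff A (Hconfig m n) := sd_mem_left hve hveH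
      have hcard : (symmDiff (A.erase s(u, vneigh m n u)) (Hconfig m n)).card ≤ N := by
        rw [sd_erase hve hveH, Finset.card_erase_of_mem hD]
        have : 1 ≤ (symmDiff A (Hconfig m n)).card := Finset.card_pos.mpr ⟨_, hD⟩
        omega
      by_cases hvv : vneigh m n u = v
      · -- merge
        rw [hvv] at hadj hve hcard
        obtain ⟨ht, hc, hfs'⟩ := comm_merge_erase hm hn hm4 hn4 h hfs huv hadj hdu hdv hve
        exact ⟨A.erase s(u, v), v, ht, hfs', by omega, hc⟩
      · obtain ⟨ht, hc, hfs'⟩ := comm_u_erase hm hn hm4 hn4 h hfs huv hadj hvv hdu hve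
        have hdv' : bdeg m n (A.erase s(u, vneigh m n u)) v = 3 := by
          have hvnot : v ∉ s(u, vneigh m n u) := by
            rw [Sym2.mem_iff]
            rintro (rfl | rfl)
            · exact huv rfl
            · exact hvv rfl
          rw [bdeg_erase_not hve hvnot, hdv]
        obtain ⟨B, b, htB, hfsB, hcardB, hcB⟩ := IH ht hfs' hvv hdv' hcard
        exact ⟨B, b, htB, hfsB, by omega, comm_trans m n hc hcB⟩

-- ============ the canonical state ============

include hm hm4 in
lemma worm_Hstate : IsWormState m n (Hconfig m n) 0 0 := by
  refine ⟨Hconfig_subset, fun x => ?_⟩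
  rw [bdeg_Hconfig hm hm4 x]
  simp [Nat.odd_iff]

include hm hm4 in
lemma Hstate_fs : ∀ y : Vtx m n, bdeg m n (Hconfig m n) y ≠ 0 := by
  intro y
  rw [bdeg_Hconfig hm hm4 y]
  omega

include hm hn hm4 hn4 in
lemma exists_flippable {A : Finset (Sym2 (Vtx m n))} (hA : A ⊆ honeyEdges m n)
    (hdeg : ∀ x, bdeg m n A x = 2) (hne : A ≠ Hconfig m n) :
    ∃ x w, HoneyAdj m n x w ∧ s(x, w) ∈ Hconfig m n ∧ s(x, w) ∉ A := by
  have hsd : symmDiff A (Hconfig m n) ≠ ∅ := fun hc => hne (sd_empty_iff.mp hc)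
  obtain ⟨e, he⟩ := Finset.nonempty_iff_ne_empty.mpr hsd
  rw [Finset.mem_symmDiff] at he
  have hplus : ∀ a : Vtx m n, HoneyAdj m n a (a.1 + 1, a.2) := fun a => Or.inl ⟨rfl, Or.inl rfl⟩
  have hminus : ∀ a : Vtx m n, HoneyAdj m n a (a.1 - 1, a.2) :=
    fun a => Or.inl ⟨rfl, Or.inr (by simp)⟩
  have hplusH : ∀ a : Vtx m n, s(a, (a.1 + 1, a.2)) ∈ Hconfig m n :=
    fun a => mem_Hconfig.mpr ⟨a, rfl⟩
  have hminusH : ∀ a : Vtx m n, s(a, (a.1 - 1, a.2)) ∈ Hconfig m n := by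
    intro a
    refine mem_Hconfig.mpr ⟨(a.1 - 1, a.2), ?_⟩
    have hx : (((a.1 - 1, a.2) : Vtx m n).1 + 1, ((a.1 - 1, a.2) : Vtx m n).2) = a :=
      Prod.ext (by simp) rfl
    rw [hx, Sym2.eq_swap]
  rcases he with ⟨heA, heH⟩ | ⟨heH, heA⟩
  · obtain ⟨a, b, hab, rfl⟩ := mem_honeyEdges.mp (hA heA)
    by_cases c1 : s(a, (a.1 + 1, a.2)) ∈ A
    · by_cases c2 : s(a, (a.1 - 1, a.2)) ∈ A
      · exfalso
        have hd12 : s(a, (a.1 + 1, a.2)) ≠ s(a, (a.1 - 1, a.2)) := by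
          intro hc
          rw [Sym2.congr_right] at hc
          exact add_one_ne_sub_one (N := m) (by omega) a.1 (congrArg Prod.fst hc)
        have hsub : ({s(a, (a.1 + 1, a.2)), s(a, (a.1 - 1, a.2))} : Finset (Sym2 (Vtx m n)))
            ⊆ A.filter (fun e => a ∈ e) := by
          intro e' he'
          simp only [Finset.mem_insert, Finset.mem_singleton] at he'
          rcases he' with rfl | rfl
          · exact Finset.mem_filter.mpr ⟨c1, by simp⟩
          · exact Finset.mem_filter.mpr ⟨c2, by simp⟩
        have hcard2 : ({s(a, (a.1 + 1, a.2)), s(a, (a.1 - 1, a.2))} :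
            Finset (Sym2 (Vtx m n))).card = 2 := by
          rw [Finset.card_insert_of_notMem (by simpa using hd12), Finset.card_singleton]
        have heq : ({s(a, (a.1 + 1, a.2)), s(a, (a.1 - 1, a.2))} :
            Finset (Sym2 (Vtx m n))) = A.filter (fun e => a ∈ e) := by
          apply Finset.eq_of_subset_of_card_le hsub
          have := hdeg a
          unfold bdeg at this
          omega
        have hein : s(a, b) ∈ A.filter (fun e => a ∈ e) :=
          Finset.mem_filter.mpr ⟨heA, by simp⟩
        rw [← heq] at hein
        simp only [Finset.mem_insert, Finset.mem_singleton] at hein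
        rcases hein with hein | hein
        · rw [hein] at heH; exact heH (hplusH a)
        · rw [hein] at heH; exact heH (hminusH a)
      · exact ⟨a, _, hminus a, hminusH a, c2⟩
    · exact ⟨a, _, hplus a, hplusH a, c1⟩
  · obtain ⟨p, rfl⟩ := mem_Hconfig.mp heH
    exact ⟨p, _, hplus p, hplusH p, heA⟩

-- ============ reaching the canonical configuration ============

include hm hn hm4 hn4 in
lemma to_H : ∀ N : ℕ, ∀ {A : Finset (Sym2 (Vtx m n))} {x : Vtx m n}
    (h : IsWormState m n A x x), (∀ y, bdeg m n A y ≠ 0) →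
    (symmDiff A (Hconfig m n)).card ≤ N →
    Comm m n ⟨(A, x, x), h⟩ ⟨(Hconfig m n, 0, 0), worm_Hstate hm hm4⟩ := by
  intro N
  induction N with
  | zero =>
    intro A x h hfs hN
    have hAH : A = Hconfig m n := sd_empty_iff.mp (Finset.card_eq_zero.mp (by omega))
    subst hAH
    exact comm_reloc hm hn hm4 hn4 h hfs 0
  | succ N IH =>
    intro A x h hfs hN
    by_cases hAH : A = Hconfig m n
    · subst hAH
      exact comm_reloc hm hn hm4 hn4 h hfs 0
    · have hdeg : ∀ z, bdeg m n A z = 2 :=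
        fun z => nondefect_deg hm hn hm4 hn4 h hfs (by simp)
      obtain ⟨x₀, w, hadj, hfH, hfA⟩ := exists_flippable hm hn hm4 hn4 h.1 hdeg hAH
      have hx₀w : x₀ ≠ w := honeyAdj_ne hm4 hn4 hadj
      -- relocate to x₀
      have hreloc := comm_reloc hm hn hm4 hn4 h hfs x₀
      -- insert the edge, moving defect to w
      have h₀ : IsWormState m n A x₀ x₀ := worm_diag_rebase h x₀
      obtain ⟨ht1, c1, fs1⟩ := comm_diag_insert hm hn hm4 hn4 h₀ hfs hadj hfA
      -- merge walk from (insert f A, w, x₀)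
      have hdx₀ : bdeg m n (insert s(x₀, w) A) x₀ = 3 := by
        rw [bdeg_insert_mem hfA (by simp), hdeg x₀]
      have hD : s(x₀, w) ∈ symmDiff A (Hconfig m n) := sd_mem_right hfA hfH
      have hcard : (symmDiff (insert s(x₀, w) A) (Hconfig m n)).card ≤ N := by
        rw [sd_insert hfA hfH, Finset.card_erase_of_mem hD]
        have : 1 ≤ (symmDiff A (Hconfig m n)).card := Finset.card_pos.mpr ⟨_, hD⟩
        omega
      obtain ⟨B, b, htB, hfsB, hcardB, hcB⟩ :=
        merge_walk hm hn hm4 hn4 N ht1 fs1 hx₀w.symm hdx₀ hcard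
      have hrest := IH htB hfsB hcardB
      exact comm_trans m n hreloc
        (comm_trans m n c1 (comm_trans m n hcB hrest))

-- ============ final assembly ============

include hm hn hm4 hn4 in
lemma to_canonical (r : WormState m n) (hr : FullSupport m n r) :
    Comm m n r ⟨(Hconfig m n, 0, 0), worm_Hstate hm hm4⟩ := by
  obtain ⟨⟨A, u, v⟩, h⟩ := r
  have hfs : ∀ y, bdeg m n A y ≠ 0 := fun y => hr y
  by_cases huv : u = v
  · subst huv
    exact to_H hm hn hm4 hn4 (symmDiff A (Hconfig m n)).card h hfs le_rfl
  · rcases defect_deg hm hn hm4 hn4 h huv (Or.inr rfl) with hdv | hdv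
    · -- stationary defect has degree 1: one fixing move
      obtain ⟨w, hadjvw, habs⟩ := exists_absent hm hn hm4 hn4 (A := A) (x := v)
        (by rw [hdv]; omega)
      have hvw : v ≠ w := honeyAdj_ne hm4 hn4 hadjvw
      by_cases hwu : w = u
      · subst hwu
        -- direct merge by inserting s(w,v)
        have habs' : s(w, v) ∉ A := by
          rw [show s(w, v) = s(v, w) from Sym2.eq_swap]
          exact habs
        have hdu : bdeg m n A w = 1 := by
          rcases defect_deg hm hn hm4 hn4 h huv (Or.inl rfl) with hdu | hdu
          · exact hdu
          · exact absurd (full_adj_mem hm hn hm4 hn4 h.1 hdu (honeyAdj_symm hadjvw))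
              habs'
        obtain ⟨ht, hc, hfs'⟩ := comm_merge_insert hm hn hm4 hn4 h hfs huv
          (honeyAdj_symm hadjvw) hdu hdv habs'
        exact comm_trans m n hc
          (to_H hm hn hm4 hn4 _ ht hfs' le_rfl)
      · have huw : u ≠ w := fun hc => hwu hc.symm
        obtain ⟨ht, hc, hfs'⟩ := comm_v_insert hm hn hm4 hn4 h hfs huv hadjvw hwu hdv habs
        have hw2 : bdeg m n A w = 2 := by
          refine nondefect_deg hm hn hm4 hn4 h hfs ?_
          rintro ⟨rfl | rfl, -⟩
          · exact hwu rfl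
          · exact hvw rfl
        have hdw : bdeg m n (insert s(v, w) A) w = 3 := by
          rw [bdeg_insert_mem habs (by simp), hw2]
        obtain ⟨B, b, htB, hfsB, -, hcB⟩ := merge_walk hm hn hm4 hn4
          (symmDiff (insert s(v, w) A) (Hconfig m n)).card ht hfs' huw hdw le_rfl
        exact comm_trans m n hc (comm_trans m n hcB
          (to_H hm hn hm4 hn4 _ htB hfsB le_rfl))
    · obtain ⟨B, b, htB, hfsB, -, hcB⟩ := merge_walk hm hn hm4 hn4
        (symmDiff A (Hconfig m n)).card h hfs huv hdv le_rfl
      exact comm_trans m n hcB (to_H hm hn hm4 hn4 _ htB hfsB le_rfl)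


theorem irreducible_prop (m n : ℕ) [NeZero m] [NeZero n]
    (hm : Even m) (hn : Even n) (hm4 : 4 ≤ m) (hn4 : 4 ≤ n)
    (st tt : WormState m n) (hst : FullSupport m n st) (htt : FullSupport m n tt) :
    Comm m n st tt :=
  comm_trans m n (to_canonical hm hn hm4 hn4 st hst)
    (comm_symm m n (to_canonical hm hn hm4 hn4 tt htt))

end FPL
end
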